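/- arXiv:2009.10981 — 5 statements merged into one kernel-verified Lean document; each statement's English description precedes it below -/
import Mathlib

section
/- There exists a constant C such that for every integer n ≥ 3 the following holds: let σ = (1 2 … n) be the n-cycle on {1,…,n} and ρ = (1 2 3) the 3-cycle. Then every even permutation of {1,…,n} can be written as a product of at most C·n² elements of {σ, σ⁻¹, ρ, ρ⁻¹}. In particular, the subgroup generated by σ and ρ contains the alternating group A_n. -/
set_option linter.unusedSectionVars false
open Equiv Equiv.Perm Fin.NatCast

namespace CST

variable (n : ℕ) [NeZero n]

/-- the point `k mod n` -/
def P (k : ℕ) : Fin n := (k : Fin n)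

/-- the 3-cycle `(0 1 2)` -/
def rho : Perm (Fin n) := Equiv.swap (P n 0) (P n 1) * Equiv.swap (P n 1) (P n 2)

/-- generators -/
def Gen (g : Perm (Fin n)) : Prop :=
  g = finRotate n ∨ g = (finRotate n)⁻¹ ∨ g = rho n ∨ g = (rho n)⁻¹

/-- `π` is a word of length at most `k` in the generators -/
def W (k : ℕ) (π : Perm (Fin n)) : Prop :=
  ∃ l : List (Perm (Fin n)), l.length ≤ k ∧ (∀ g ∈ l, Gen n g) ∧ l.prod = π

/-- 3-cycle as product of two swaps -/
def T (a b c : Fin n) : Perm (Fin n) := Equiv.swap a b * Equiv.swap b c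

variable {n}

theorem P_eq_P {u v : ℕ} (h : u % n = v % n) : P n u = P n v := by
  unfold P; exact Fin.ext (by simp [Fin.val_natCast, h])

theorem P_val (u : ℕ) : (P n u).val = u % n := by simp [P, Fin.val_natCast]

theorem P_eq_of_mod {u : ℕ} {v : Fin n} (h : u % n = v.val) : P n u = v :=
  Fin.ext (by simp [P, Fin.val_natCast, h])

theorem mod_helper (u c : ℕ) : (u % n + c) % n = (u + c) % n := by
  conv_lhs => rw [Nat.add_mod, Nat.mod_mod_of_dvd _ dvd_rfl, ← Nat.add_mod]

theorem W_mono {k m : ℕ} {π : Perm (Fin n)} (h : W n k π) (hkm : k ≤ m) : W n m π := by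
  obtain ⟨l, h1, h2, h3⟩ := h; exact ⟨l, h1.trans hkm, h2, h3⟩

theorem W_one : W n 0 1 := ⟨[], by simp, by simp, rfl⟩

theorem W_gen {g : Perm (Fin n)} (h : Gen n g) : W n 1 g := ⟨[g], by simp, by simpa, by simp⟩

theorem W_mul {k m : ℕ} {x y : Perm (Fin n)} (hx : W n k x) (hy : W n m y) :
    W n (k + m) (x * y) := by
  obtain ⟨l1, h1, h2, h3⟩ := hx
  obtain ⟨l2, g1, g2, g3⟩ := hy
  refine ⟨l1 ++ l2, ?_, ?_, by simp [h3, g3]⟩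
  · simpa using Nat.add_le_add h1 g1
  · intro g hg; rcases List.mem_append.mp hg with h | h; exacts [h2 g h, g2 g h]

theorem Gen_inv {g : Perm (Fin n)} (h : Gen n g) : Gen n g⁻¹ := by
  rcases h with h | h | h | h <;> simp [Gen, h]

theorem W_inv {k : ℕ} {x : Perm (Fin n)} (hx : W n k x) : W n k x⁻¹ := by
  obtain ⟨l, h1, h2, h3⟩ := hx
  refine ⟨(l.map Inv.inv).reverse, by simpa using h1, ?_, ?_⟩
  · intro g hg
    simp only [List.mem_reverse, List.mem_map] at hg
    obtain ⟨a, ha, rfl⟩ := hg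
    exact Gen_inv (h2 a ha)
  · rw [← h3, ← List.prod_inv_reverse]

theorem W_conj {k : ℕ} {x g : Perm (Fin n)} (hg : Gen n g) (hx : W n k x) :
    W n (k + 2) (g * x * g⁻¹) := by
  have := W_mul (W_mul (W_gen hg) hx) (W_gen (Gen_inv hg))
  simpa [add_comm, add_left_comm] using this

omit [NeZero n] in
theorem T_conj (g : Perm (Fin n)) (a b c : Fin n) :
    g * T n a b c * g⁻¹ = T n (g a) (g b) (g c) := by
  simp only [T, swap_apply_apply]
  group


theorem sigma_P (k : ℕ) : finRotate n (P n k) = P n (k+1) := by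
  obtain ⟨m, rfl⟩ : ∃ m, n = m + 1 := ⟨n - 1, by have := NeZero.pos n; omega⟩
  unfold P
  rw [finRotate_succ_apply]
  push_cast
  ring

theorem sigma_inv_P (k : ℕ) : (finRotate n)⁻¹ (P n (k+1)) = P n k := by
  rw [← sigma_P k]; simp

theorem sigma_inv_P0 : (finRotate n)⁻¹ (P n 0) = P n (n-1) := by
  have hq : (n-1)+1 = n := by have := NeZero.pos n; omega
  have h0 : P n 0 = P n ((n-1)+1) := P_eq_P (by rw [hq, Nat.mod_self, Nat.zero_mod])
  rw [h0, sigma_inv_P]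

theorem P_ne {i j : ℕ} (hi : i < n) (hj : j < n) (hij : i ≠ j) : P n i ≠ P n j := by
  intro h
  have := congrArg Fin.val h
  rw [P_val, P_val, Nat.mod_eq_of_lt hi, Nat.mod_eq_of_lt hj] at this
  exact hij this

theorem rho_P0 (hn : 3 ≤ n) : rho n (P n 0) = P n 1 := by
  have h01 : P n 0 ≠ P n 1 := P_ne (by omega) (by omega) (by omega)
  have h02 : P n 0 ≠ P n 2 := P_ne (by omega) (by omega) (by omega)
  have h12 : P n 1 ≠ P n 2 := P_ne (by omega) (by omega) (by omega)
  show (Equiv.swap (P n 0) (P n 1)) ((Equiv.swap (P n 1) (P n 2)) (P n 0)) = P n 1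
  rw [Equiv.swap_apply_of_ne_of_ne h01 h02, Equiv.swap_apply_left]

theorem rho_P1 (hn : 3 ≤ n) : rho n (P n 1) = P n 2 := by
  have h01 : P n 0 ≠ P n 1 := P_ne (by omega) (by omega) (by omega)
  have h02 : P n 0 ≠ P n 2 := P_ne (by omega) (by omega) (by omega)
  have h12 : P n 1 ≠ P n 2 := P_ne (by omega) (by omega) (by omega)
  show (Equiv.swap (P n 0) (P n 1)) ((Equiv.swap (P n 1) (P n 2)) (P n 1)) = P n 2
  rw [Equiv.swap_apply_left, Equiv.swap_apply_of_ne_of_ne (Ne.symm h02) (Ne.symm h12)]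

theorem rho_P2 (hn : 3 ≤ n) : rho n (P n 2) = P n 0 := by
  have h01 : P n 0 ≠ P n 1 := P_ne (by omega) (by omega) (by omega)
  have h12 : P n 1 ≠ P n 2 := P_ne (by omega) (by omega) (by omega)
  show (Equiv.swap (P n 0) (P n 1)) ((Equiv.swap (P n 1) (P n 2)) (P n 2)) = P n 0
  rw [Equiv.swap_apply_right, Equiv.swap_apply_right]

theorem rho_fix (hn : 3 ≤ n) {j : ℕ} (h3 : 3 ≤ j) (hj : j < n) : rho n (P n j) = P n j := by
  have h0 : P n j ≠ P n 0 := P_ne hj (by omega) (by omega)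
  have h1 : P n j ≠ P n 1 := P_ne hj (by omega) (by omega)
  have h2 : P n j ≠ P n 2 := P_ne hj (by omega) (by omega)
  show (Equiv.swap (P n 0) (P n 1)) ((Equiv.swap (P n 1) (P n 2)) (P n j)) = P n j
  rw [Equiv.swap_apply_of_ne_of_ne h1 h2, Equiv.swap_apply_of_ne_of_ne h0 h1]

theorem rho_eq_T : rho n = T n (P n 0) (P n 1) (P n 2) := rfl

theorem W_rho : W n 1 (rho n) := W_gen (Or.inr (Or.inr (Or.inl rfl)))

theorem Gen_sigma : Gen n (finRotate n) := Or.inl rfl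
theorem Gen_sigma_inv : Gen n (finRotate n)⁻¹ := Or.inr (Or.inl rfl)
theorem Gen_rho : Gen n (rho n) := Or.inr (Or.inr (Or.inl rfl))

theorem sigma_pow_P (k m : ℕ) : ((finRotate n)^k) (P n m) = P n (m + k) := by
  induction k generalizing m with
  | zero => simp
  | succ k ih =>
    have : ((finRotate n)^(k+1)) (P n m) = ((finRotate n)^k) (finRotate n (P n m)) := by
      rw [pow_succ, Equiv.Perm.mul_apply]
    rw [this, sigma_P, ih]
    congr 1
    omega

theorem W_conj_sigma_pow {k : ℕ} {x : Perm (Fin n)} (m : ℕ) (hx : W n k x) :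
    W n (k + 2*m) ((finRotate n)^m * x * ((finRotate n)^m)⁻¹) := by
  induction m with
  | zero => simpa using hx
  | succ m ih =>
    have heq : (finRotate n)^(m+1) * x * ((finRotate n)^(m+1))⁻¹
        = finRotate n * ((finRotate n)^m * x * ((finRotate n)^m)⁻¹) * (finRotate n)⁻¹ := by
      rw [pow_succ']; group
    rw [heq]
    have := W_conj Gen_sigma ih
    exact W_mono this (by omega)

theorem S1 (hn : 3 ≤ n) : ∀ t, 1 ≤ t → t ≤ n - 2 →
    W n (4*t) (T n (P n (n-t)) (P n 0) (P n 1)) := by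
  intro t ht1
  induction t, ht1 using Nat.le_induction with
  | base =>
    intro _
    have h := W_conj Gen_sigma_inv (W_rho (n := n))
    rw [rho_eq_T, T_conj] at h
    have e0 : (finRotate n)⁻¹ (P n 0) = P n (n-1) := sigma_inv_P0
    have e1 : (finRotate n)⁻¹ (P n 1) = P n 0 := sigma_inv_P 0
    have e2 : (finRotate n)⁻¹ (P n 2) = P n 1 := sigma_inv_P 1
    rw [e0, e1, e2] at h
    exact W_mono h (by omega)
  | succ t ht ih =>
    intro hub
    have h := ih (by omega)
    have h1 := W_conj Gen_rho h
    rw [T_conj] at h1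
    rw [rho_fix hn (by omega) (by omega), rho_P0 hn, rho_P1 hn] at h1
    have h2 := W_conj Gen_sigma_inv h1
    rw [T_conj] at h2
    have e0 : P n (n - t) = P n ((n - (t+1)) + 1) := by
      congr 1; omega
    rw [e0, sigma_inv_P, sigma_inv_P 0, sigma_inv_P 1] at h2
    exact W_mono h2 (by omega)

theorem S2 (hn : 3 ≤ n) : ∀ s t, 1 ≤ t → t + s + 3 ≤ n →
    W n (4*t+4*s) (T n (P n (n-t-s)) (P n (n-s)) (P n 1)) := by
  intro s
  induction s with
  | zero =>
    intro t ht1 hub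
    have h := S1 hn t ht1 (by omega)
    have e : P n (n - 0) = P n 0 := P_eq_P (by rw [Nat.sub_zero, Nat.mod_self, Nat.zero_mod])
    rw [show n - t - 0 = n - t from rfl, e]
    exact W_mono h (by omega)
  | succ s ih =>
    intro t ht1 hub
    have h := ih t ht1 (by omega)
    have h1 := W_conj Gen_sigma_inv h
    rw [T_conj] at h1
    have e0 : P n (n - t - s) = P n ((n - t - (s+1)) + 1) := by congr 1; omega
    have e1 : P n (n - s) = P n ((n - (s+1)) + 1) := by congr 1; omega
    rw [e0, e1, sigma_inv_P, sigma_inv_P, sigma_inv_P 0] at h1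
    have h2 := W_conj Gen_rho h1
    rw [T_conj] at h2
    rw [rho_fix hn (by omega) (by omega), rho_fix hn (by omega) (by omega), rho_P0 hn] at h2
    exact W_mono h2 (by omega)

theorem S2' (hn : 3 ≤ n) (t s : ℕ) (ht : 1 ≤ t)
    (hd : t + s + 3 ≤ n ∨ (s = 0 ∧ t ≤ n - 2)) :
    W n (4*t+4*s) (T n (P n (n-t-s)) (P n (n-s)) (P n 1)) := by
  rcases hd with hd | ⟨rfl, ht2⟩
  · exact S2 hn s t ht hd
  · have h := S1 hn t ht ht2
    have e : P n (n - 0) = P n 0 := P_eq_P (by rw [Nat.sub_zero, Nat.mod_self, Nat.zero_mod])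
    rw [show n - t - 0 = n - t from rfl, e]
    exact W_mono h (by omega)

theorem Cov (hn : 3 ≤ n) (t s k : ℕ) (ht : 1 ≤ t)
    (hd : t + s + 3 ≤ n ∨ (s = 0 ∧ t ≤ n - 2)) :
    W n (4*t+4*s+2*k) (T n (P n (n-t-s+k)) (P n (n-s+k)) (P n (1+k))) := by
  have h := W_conj_sigma_pow k (S2' hn t s ht hd)
  rw [T_conj, sigma_pow_P, sigma_pow_P, sigma_pow_P] at h
  exact h

theorem Wcore (hn : 3 ≤ n) (x y z : Fin n) (t s : ℕ) (ht : 1 ≤ t)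
    (hd : t + s + 3 ≤ n ∨ (s = 0 ∧ t ≤ n - 2))
    (hy : (x.val + t) % n = y.val) (hz : (y.val + (s+1)) % n = z.val) :
    W n (6*n) (T n x y z) := by
  have hn0 : 0 < n := by omega
  set k := (x.val + t + s) % n with hk
  have hkn : k < n := Nat.mod_lt _ hn0
  have hts : t + s ≤ n := by rcases hd with h | ⟨rfl, h⟩ <;> omega
  have e1 : P n (n-t-s+k) = x := by
    apply P_eq_of_mod
    rw [Nat.add_comm (n-t-s) k, hk, mod_helper,
      show x.val + t + s + (n-t-s) = x.val + n by omega,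
      Nat.add_mod_right, Nat.mod_eq_of_lt x.isLt]
  have e2 : P n (n-s+k) = y := by
    apply P_eq_of_mod
    rw [Nat.add_comm (n-s) k, hk, mod_helper,
      show x.val + t + s + (n-s) = (x.val + t) + n by omega,
      Nat.add_mod_right, hy]
  have e3 : P n (1+k) = z := by
    apply P_eq_of_mod
    rw [Nat.add_comm 1 k, hk, mod_helper,
      show x.val + t + s + 1 = (x.val + t) + (s+1) by omega,
      ← mod_helper, hy, hz]
  have h := Cov hn t s k ht hd
  rw [e1, e2, e3] at h
  refine W_mono h ?_
  rcases hd with h' | ⟨rfl, h'⟩ <;> omega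

/-- cyclic distance -/
def dst (x y : Fin n) : ℕ := if x.val < y.val then y.val - x.val else y.val + n - x.val

theorem dst_spec {x y : Fin n} (h : x ≠ y) :
    1 ≤ dst x y ∧ dst x y ≤ n - 1 ∧ (x.val + dst x y) % n = y.val := by
  have hne : x.val ≠ y.val := fun hv => h (Fin.ext hv)
  have hx := x.isLt
  have hy := y.isLt
  unfold dst
  split_ifs with h'
  · refine ⟨by omega, by omega, ?_⟩
    rw [show x.val + (y.val - x.val) = y.val by omega]
    exact Nat.mod_eq_of_lt y.isLt
  · refine ⟨by omega, by omega, ?_⟩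
    rw [show x.val + (y.val + n - x.val) = y.val + n by omega, Nat.add_mod_right]
    exact Nat.mod_eq_of_lt y.isLt

theorem modsum {A S : ℕ} (hA : A < n) (h : (A + S) % n = A) : S % n = 0 := by
  have hn0 : 0 < n := by omega
  have h1 : S % n < n := Nat.mod_lt _ hn0
  rw [Nat.add_mod, Nat.mod_eq_of_lt hA] at h
  rcases lt_or_ge (A + S % n) n with hlt | hge
  · rw [Nat.mod_eq_of_lt hlt] at h; omega
  · rw [Nat.mod_eq_sub_mod hge, Nat.mod_eq_of_lt (by omega)] at h; omega

theorem chain2 {x y : Fin n} (h : x ≠ y) : dst x y + dst y x = n := by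
  obtain ⟨a1, a2, a3⟩ := dst_spec h
  obtain ⟨b1, b2, b3⟩ := dst_spec h.symm
  have hx := x.isLt
  have key : (x.val + (dst x y + dst y x)) % n = x.val := by
    rw [show x.val + (dst x y + dst y x) = (x.val + dst x y) + dst y x by omega,
      ← mod_helper, a3, b3]
  have hdvd := Nat.dvd_of_mod_eq_zero (modsum hx key)
  obtain ⟨q, hq⟩ := hdvd
  have hq1 : q = 1 := by
    rcases Nat.lt_or_ge q 1 with h' | h'
    · interval_cases q <;> omega
    rcases Nat.lt_or_ge q 2 with h'' | h''
    · omega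
    · have : n * 2 ≤ n * q := Nat.mul_le_mul_left n h''
      omega
  rw [hq1, Nat.mul_one] at hq
  omega

theorem chain3 {x y z : Fin n} (hxy : x ≠ y) (hyz : y ≠ z) (hzx : z ≠ x) :
    dst x y + dst y z + dst z x = n ∨ dst x y + dst y z + dst z x = 2*n := by
  obtain ⟨a1, a2, a3⟩ := dst_spec hxy
  obtain ⟨b1, b2, b3⟩ := dst_spec hyz
  obtain ⟨c1, c2, c3⟩ := dst_spec hzx
  have hx := x.isLt
  have key : (x.val + (dst x y + dst y z + dst z x)) % n = x.val := by
    rw [show x.val + (dst x y + dst y z + dst z x)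
        = ((x.val + dst x y) + dst y z) + dst z x by omega,
      ← mod_helper ((x.val + dst x y) + dst y z) (dst z x),
      ← mod_helper (x.val + dst x y) (dst y z), a3, b3, c3]
  have hdvd := Nat.dvd_of_mod_eq_zero (modsum hx key)
  obtain ⟨q, hq⟩ := hdvd
  have hn0 : 0 < n := by omega
  have hq1 : q = 1 ∨ q = 2 := by
    rcases Nat.lt_or_ge q 1 with h' | h'
    · interval_cases q <;> omega
    rcases Nat.lt_or_ge q 3 with h'' | h''
    · omega
    · have : n * 3 ≤ n * q := Nat.mul_le_mul_left n h''
      omega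
  rcases hq1 with rfl | rfl <;> omega

omit [NeZero n] in
theorem T_rot (a b c : Fin n) (hab : a ≠ b) (hbc : b ≠ c) (hac : a ≠ c) :
    T n a b c = T n b c a := by
  unfold T
  ext w
  simp only [Equiv.Perm.mul_apply, Equiv.swap_apply_def]
  split_ifs <;> simp_all

omit [NeZero n] in
theorem T_invol (a b c : Fin n) (hab : a ≠ b) (hbc : b ≠ c) (hac : a ≠ c) :
    T n a b c = (T n a c b)⁻¹ := by
  unfold T
  rw [mul_inv_rev]
  simp only [Equiv.swap_inv]
  ext w
  simp only [Equiv.Perm.mul_apply, Equiv.swap_apply_def]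
  split_ifs <;> simp_all

omit [NeZero n] in
theorem T_fst {a b c : Fin n} (hab : a ≠ b) (hac : a ≠ c) : T n a b c a = b := by
  show (Equiv.swap a b) ((Equiv.swap b c) a) = b
  rw [Equiv.swap_apply_of_ne_of_ne hab hac, Equiv.swap_apply_left]

omit [NeZero n] in
theorem T_fix {a b c w : Fin n} (ha : w ≠ a) (hb : w ≠ b) (hc : w ≠ c) : T n a b c w = w := by
  show (Equiv.swap a b) ((Equiv.swap b c) w) = w
  rw [Equiv.swap_apply_of_ne_of_ne hb hc, Equiv.swap_apply_of_ne_of_ne ha hb]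

theorem W1pos (hn : 3 ≤ n) (x y z : Fin n) (hxy : x ≠ y) (hyz : y ≠ z) (hzx : z ≠ x)
    (hsum : dst x y + dst y z + dst z x = n) : W n (6*n) (T n x y z) := by
  obtain ⟨a1, a2, a3⟩ := dst_spec hxy
  obtain ⟨b1, b2, b3⟩ := dst_spec hyz
  obtain ⟨c1, c2, c3⟩ := dst_spec hzx
  by_cases h3 : 2 ≤ dst z x
  · refine Wcore hn x y z (dst x y) (dst y z - 1) a1 (Or.inl (by omega)) a3 ?_
    rw [show dst y z - 1 + 1 = dst y z by omega]
    exact b3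
  by_cases h1 : 2 ≤ dst x y
  · rw [T_rot x y z hxy hyz (Ne.symm hzx)]
    refine Wcore hn y z x (dst y z) (dst z x - 1) b1 (Or.inl (by omega)) b3 ?_
    rw [show dst z x - 1 + 1 = dst z x by omega]
    exact c3
  by_cases h2 : 2 ≤ dst y z
  · rw [T_rot x y z hxy hyz (Ne.symm hzx), T_rot y z x hyz hzx (Ne.symm hxy)]
    refine Wcore hn z x y (dst z x) (dst x y - 1) c1 (Or.inl (by omega)) c3 ?_
    rw [show dst x y - 1 + 1 = dst x y by omega]
    exact a3
  · refine Wcore hn x y z 1 0 le_rfl (Or.inr ⟨rfl, by omega⟩) ?_ ?_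
    · rw [show (1:ℕ) = dst x y by omega]; exact a3
    · rw [show (0:ℕ) + 1 = dst y z by omega]; exact b3

theorem W1 (hn : 3 ≤ n) (x y z : Fin n) (hxy : x ≠ y) (hyz : y ≠ z) (hzx : z ≠ x) :
    W n (6*n) (T n x y z) := by
  rcases chain3 hxy hyz hzx with hs | hs
  · exact W1pos hn x y z hxy hyz hzx hs
  · have h1 := chain2 hxy
    have h2 := chain2 hyz
    have h3 := chain2 hzx
    have hsum' : dst x z + dst z y + dst y x = n := by
      have e1 := chain2 (Ne.symm hzx)
      have e2 := chain2 (Ne.symm hyz)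
      have e3 := chain2 (Ne.symm hxy)
      omega
    rw [T_invol x y z hxy hyz (fun h => hzx h.symm)]
    exact W_inv (W1pos hn x z y (Ne.symm hzx) (Ne.symm hyz) (Ne.symm hxy) hsum')

theorem D (hn : 3 ≤ n) : ∀ s : ℕ, ∀ π : Perm (Fin n), Equiv.Perm.sign π = 1 →
    π.support.card ≤ s → W n (s * (6*n)) π := by
  intro s
  induction s with
  | zero =>
    intro π _ hcard
    have h1 : π = 1 := support_eq_empty_iff.mp
      (Finset.card_eq_zero.mp (Nat.le_antisymm hcard (Nat.zero_le _)))
    subst h1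
    exact W_mono W_one (Nat.zero_le _)
  | succ s ih =>
    intro π hsign hcard
    by_cases hπ : π = 1
    · subst hπ; exact W_mono W_one (Nat.zero_le _)
    have hc0 : π.support.card ≠ 0 := fun h => hπ (support_eq_empty_iff.mp (Finset.card_eq_zero.mp h))
    have hc1 : π.support.card ≠ 1 := Equiv.Perm.card_support_ne_one π
    have hc2 : π.support.card ≠ 2 := by
      intro h
      obtain ⟨a, b, hab, rfl⟩ := Equiv.Perm.card_support_eq_two.mp h
      rw [Equiv.Perm.sign_swap hab] at hsign
      exact absurd hsign (by decide)
    have h3 : 3 ≤ π.support.card := by omega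
    obtain ⟨j, hj⟩ := Finset.card_pos.mp (show 0 < π.support.card by omega)
    set b := π j with hb
    have hbj : b ≠ j := Equiv.Perm.mem_support.mp hj
    have hbsup : b ∈ π.support := Equiv.Perm.apply_mem_support.mpr hj
    have hpair : ({j, b} : Finset (Fin n)).card ≤ 2 :=
      (Finset.card_insert_le j {b}).trans (by simp)
    have hsd : 0 < (π.support \ {j, b}).card := by
      have := Finset.le_card_sdiff ({j, b} : Finset (Fin n)) π.support
      omega
    obtain ⟨x, hx⟩ := Finset.card_pos.mp hsd
    rw [Finset.mem_sdiff, Finset.mem_insert, Finset.mem_singleton] at hx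
    obtain ⟨hxsup, hxne⟩ := hx
    push_neg at hxne
    obtain ⟨hxj, hxb⟩ := hxne
    have hjx : j ≠ x := Ne.symm hxj
    have hbx : b ≠ x := Ne.symm hxb
    set τ := T n b j x with hτdef
    have hτ : W n (6*n) τ := W1 hn b j x hbj hjx (Ne.symm hbx)
    set π' := τ * π with hπ'
    have hπ'j : π' j = j := by
      rw [hπ', Equiv.Perm.mul_apply, ← hb, hτdef, T_fst hbj hbx]
    have hsub : π'.support ⊆ π.support := by
      intro w hw
      by_contra hwn
      have hfix : π w = w := Equiv.Perm.notMem_support.mp hwn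
      have hwb : w ≠ b := fun h => hwn (h ▸ hbsup)
      have hwj : w ≠ j := fun h => hwn (h ▸ hj)
      have hwx : w ≠ x := fun h => hwn (h ▸ hxsup)
      have : π' w = w := by
        rw [hπ', Equiv.Perm.mul_apply, hfix, hτdef, T_fix hwb hwj hwx]
      exact Equiv.Perm.mem_support.mp hw this
    have hjn : j ∉ π'.support := Equiv.Perm.notMem_support.mpr hπ'j
    have hlt : π'.support.card < π.support.card :=
      Finset.card_lt_card ((Finset.ssubset_iff_of_subset hsub).mpr ⟨j, hj, hjn⟩)
    have hsign' : Equiv.Perm.sign π' = 1 := by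
      rw [hπ', Equiv.Perm.sign_mul, hτdef]
      have : Equiv.Perm.sign (T n b j x) = 1 := by
        unfold T
        rw [Equiv.Perm.sign_mul, Equiv.Perm.sign_swap hbj, Equiv.Perm.sign_swap hjx]
        decide
      rw [this, hsign, one_mul]
    have hW' := ih π' hsign' (by omega)
    have hπeq : π = τ⁻¹ * π' := by rw [hπ']; group
    rw [hπeq]
    have := W_mul (W_inv hτ) hW'
    refine W_mono this (le_of_eq (by ring))

theorem rho_eq_formPerm (hn : 3 ≤ n) (h0 : (0:ℕ) < n) (h1 : (1:ℕ) < n) (h2 : (2:ℕ) < n) :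
    rho n = List.formPerm [(⟨0, h0⟩ : Fin n), ⟨1, h1⟩, ⟨2, h2⟩] := by
  have e0 : (⟨0, h0⟩ : Fin n) = P n 0 := Fin.ext (by rw [P_val, Nat.mod_eq_of_lt h0])
  have e1 : (⟨1, h1⟩ : Fin n) = P n 1 := Fin.ext (by rw [P_val, Nat.mod_eq_of_lt h1])
  have e2 : (⟨2, h2⟩ : Fin n) = P n 2 := Fin.ext (by rw [P_val, Nat.mod_eq_of_lt h2])
  rw [List.formPerm_cons_cons, List.formPerm_cons_cons, List.formPerm_singleton, mul_one,
    e0, e1, e2]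
  rfl

end CST

/-- There is a constant `C` such that for every `n ≥ 3`, every even permutation
of `{1,…,n}` (modeled as `Fin n`) is a product of at most `C * n ^ 2` elements of
`{σ, σ⁻¹, ρ, ρ⁻¹}`, where `σ = (1 2 … n)` is the full rotation and `ρ = (1 2 3)` is the
3-cycle on the first three points. In particular, the subgroup generated by `σ` and `ρ`
contains the alternating group. -/
theorem cyclic_shift_ncycle_threecycle_generate_even :
    ∃ C : ℕ, ∀ n : ℕ, ∀ _hn : 3 ≤ n,
      (∀ π : Equiv.Perm (Fin n), Equiv.Perm.sign π = 1 →
        ∃ l : List (Equiv.Perm (Fin n)),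
          l.length ≤ C * n ^ 2 ∧
          (∀ g ∈ l,
            g = finRotate n ∨ g = (finRotate n)⁻¹ ∨
            g = List.formPerm [(⟨0, by omega⟩ : Fin n), ⟨1, by omega⟩, ⟨2, by omega⟩] ∨
            g = (List.formPerm [(⟨0, by omega⟩ : Fin n), ⟨1, by omega⟩, ⟨2, by omega⟩])⁻¹) ∧
          l.prod = π) ∧
      alternatingGroup (Fin n) ≤
        Subgroup.closure
          ({finRotate n,
            List.formPerm [(⟨0, by omega⟩ : Fin n), ⟨1, by omega⟩, ⟨2, by omega⟩]} :
            Set (Equiv.Perm (Fin n))) := by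
  refine ⟨6, fun n hn => ?_⟩
  haveI : NeZero n := ⟨by omega⟩
  have hρ := CST.rho_eq_formPerm (n := n) hn (by omega) (by omega) (by omega)
  have hcard : ∀ π : Equiv.Perm (Fin n), π.support.card ≤ n :=
    fun π => (Finset.card_le_univ _).trans (by simp)
  constructor
  · intro π hsign
    obtain ⟨l, hlen, hgen, hprod⟩ := CST.D hn n π hsign (hcard π)
    refine ⟨l, ?_, ?_, hprod⟩
    · calc l.length ≤ n * (6*n) := hlen
        _ ≤ 6 * n ^ 2 := le_of_eq (by ring)
    · intro g hg
      rcases hgen g hg with h | h | h | h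
      · exact Or.inl h
      · exact Or.inr (Or.inl h)
      · exact Or.inr (Or.inr (Or.inl (h.trans hρ)))
      · exact Or.inr (Or.inr (Or.inr (by rw [h, hρ])))
  · intro π hπ
    have hsign := Equiv.Perm.mem_alternatingGroup.mp hπ
    obtain ⟨l, hlen, hgen, hprod⟩ := CST.D hn n π hsign (hcard π)
    rw [← hprod]
    apply Subgroup.list_prod_mem
    intro g hg
    have hσ : finRotate n ∈ Subgroup.closure
        ({finRotate n,
          List.formPerm [(⟨0, by omega⟩ : Fin n), ⟨1, by omega⟩, ⟨2, by omega⟩]} :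
          Set (Equiv.Perm (Fin n))) :=
      Subgroup.subset_closure (Set.mem_insert _ _)
    have hρmem : CST.rho n ∈ Subgroup.closure
        ({finRotate n,
          List.formPerm [(⟨0, by omega⟩ : Fin n), ⟨1, by omega⟩, ⟨2, by omega⟩]} :
          Set (Equiv.Perm (Fin n))) := by
      rw [hρ]
      exact Subgroup.subset_closure (Set.mem_insert_of_mem _ rfl)
    rcases hgen g hg with h | h | h | h <;> rw [h]
    · exact hσ
    · exact inv_mem hσ
    · exact hρmem
    · exact inv_mem hρmem
end

section
/- There exists a constant C such that for all integers a ≥ 4 and b ≥ 5 with n = a+b−2, every even permutation of {1,…,n} can be written as a product of at most C·n² elements of {α, α⁻¹, β, β⁻¹}, where α and β are the generators of the 2-connected (a,b)-puzzle. In particular, the subgroup of S_n generated by {α, β} contains the alternating group A_n. -/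
/-- Generator `α = (1 2 … a)` of the 2-connected `(a,b)`-puzzle on `n = a + b - 2` points,
0-indexed as the cycle `(0 1 … a-1)` on `Fin (a + b - 2)`. -/
def twoConnAlpha (a b : ℕ) : Equiv.Perm (Fin (a + b - 2)) :=
  List.formPerm ((List.finRange (a + b - 2)).take a)

/-- Generator `β = (a-1 a a+1 … n)` of the 2-connected `(a,b)`-puzzle on `n = a + b - 2`
points, 0-indexed as the cycle `(a-2 a-1 … n-1)` on `Fin (a + b - 2)`. -/
def twoConnBeta (a b : ℕ) : Equiv.Perm (Fin (a + b - 2)) :=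
  List.formPerm ((List.finRange (a + b - 2)).drop (a - 2))

namespace TC

open Equiv Equiv.Perm

variable {X : Type*} [DecidableEq X]

/-- The 3-cycle `x → y → z → x`. -/
def c3 (x y z : X) : Equiv.Perm X := Equiv.swap x z * Equiv.swap x y

theorem c3_apply {x y z : X} (hxy : x ≠ y) (hxz : x ≠ z) (hyz : y ≠ z) (w : X) :
    c3 x y z w = if w = x then y else if w = y then z else if w = z then x else w := by
  simp only [c3, Equiv.Perm.mul_apply, Equiv.swap_apply_def]
  split_ifs <;> simp_all

theorem c3_inv (x y z : X) : (c3 x y z)⁻¹ = c3 x z y := by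
  simp [c3, mul_inv_rev]

theorem c3_conj (σ : Equiv.Perm X) (x y z : X) :
    σ * c3 x y z * σ⁻¹ = c3 (σ x) (σ y) (σ z) := by
  simp only [c3, Equiv.swap_apply_apply]
  ext w
  simp [mul_assoc]

theorem sign_c3 [Fintype X] {x y z : X} (h1 : x ≠ z) (h2 : x ≠ y) :
    Equiv.Perm.sign (c3 x y z) = 1 := by
  simp [c3, Equiv.Perm.sign_swap, h1, h2]

set_option maxHeartbeats 1000000 in
theorem c3_rot {x y z : X} (h1 : x ≠ y) (h2 : x ≠ z) (h3 : y ≠ z) :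
    c3 x y z = c3 z x y := by
  ext w
  rw [c3_apply h1 h2 h3, c3_apply h2.symm (Ne.symm h3) h1]
  split_ifs <;> simp_all

set_option maxHeartbeats 1000000 in
/-- Splitting a generic 3-cycle through an extra point `f`. -/
theorem c3_split {f x y z : X} (hxy : x ≠ y) (hxz : x ≠ z) (hyz : y ≠ z)
    (hfx : f ≠ x) (hfy : f ≠ y) (hfz : f ≠ z) :
    c3 x y z = c3 f x y * c3 f y z := by
  ext w
  rw [Equiv.Perm.mul_apply, c3_apply hxy hxz hyz, c3_apply hfx hfy hxy,
    c3_apply hfy hfz hyz]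
  split_ifs <;> simp_all

set_option maxHeartbeats 1000000 in
/-- Extension identity: `(f x z) = (f y z)⁻¹ (f x y)⁻¹ (f y z)`. -/
theorem c3_extend {f x y z : X} (hxy : x ≠ y) (hxz : x ≠ z) (hyz : y ≠ z)
    (hfx : f ≠ x) (hfy : f ≠ y) (hfz : f ≠ z) :
    c3 f x z = (c3 f y z)⁻¹ * (c3 f x y)⁻¹ * c3 f y z := by
  rw [c3_inv, c3_inv]
  ext w
  rw [Equiv.Perm.mul_apply, Equiv.Perm.mul_apply, c3_apply hfx hfz hxz,
    c3_apply hfy hfz hyz, c3_apply hfy hfx (Ne.symm hxy), c3_apply hfz hfy (Ne.symm hyz)]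
  split_ifs <;> simp_all

theorem commute_swap {p q r s : X} (h1 : p ≠ r) (h2 : p ≠ s) (h3 : q ≠ r) (h4 : q ≠ s) :
    Commute (Equiv.swap p q) (Equiv.swap r s) := by
  unfold Commute SemiconjBy
  ext w
  simp only [Equiv.Perm.mul_apply, Equiv.swap_apply_def]
  split_ifs <;> simp_all

set_option maxHeartbeats 1000000 in
theorem swap_sq {f U V : X} (hUV : U ≠ V) (hUf : U ≠ f) (hVf : V ≠ f) :
    (Equiv.swap f U * Equiv.swap f V) ^ 2 = c3 f U V := by
  ext w
  rw [sq]
  simp only [Equiv.Perm.mul_apply, Equiv.swap_apply_def,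
    c3_apply (Ne.symm hUf) (Ne.symm hVf) hUV]
  split_ifs <;> simp_all

/-- The key gadget: square of a product of two double transpositions sharing `f`. -/
theorem gadget_core {f U V A1 A2 B1 B2 : X}
    (hUV : U ≠ V) (hUf : U ≠ f) (hVf : V ≠ f)
    (hA1f : A1 ≠ f) (hA1U : A1 ≠ U) (hA1B1 : A1 ≠ B1) (hA1B2 : A1 ≠ B2) (hA1V : A1 ≠ V)
    (hA2f : A2 ≠ f) (hA2U : A2 ≠ U) (hA2B1 : A2 ≠ B1) (hA2B2 : A2 ≠ B2) (hA2V : A2 ≠ V)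
    (hB1f : B1 ≠ f) (hB1U : B1 ≠ U) (hB1V : B1 ≠ V)
    (hB2f : B2 ≠ f) (hB2U : B2 ≠ U) (hB2V : B2 ≠ V) :
    (Equiv.swap A1 A2 * Equiv.swap f U * (Equiv.swap B1 B2 * Equiv.swap f V)) ^ 2
      = c3 f U V := by
  have c12 : Commute (Equiv.swap A1 A2) (Equiv.swap f U) :=
    commute_swap hA1f hA1U hA2f hA2U
  have c13 : Commute (Equiv.swap A1 A2) (Equiv.swap B1 B2) :=
    commute_swap hA1B1 hA1B2 hA2B1 hA2B2
  have c14 : Commute (Equiv.swap A1 A2) (Equiv.swap f V) :=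
    commute_swap hA1f hA1V hA2f hA2V
  have c32 : Commute (Equiv.swap B1 B2) (Equiv.swap f U) :=
    commute_swap hB1f hB1U hB2f hB2U
  have c34 : Commute (Equiv.swap B1 B2) (Equiv.swap f V) :=
    commute_swap hB1f hB1V hB2f hB2V
  have h1 : Equiv.swap A1 A2 * Equiv.swap f U * (Equiv.swap B1 B2 * Equiv.swap f V)
      = Equiv.swap A1 A2 * (Equiv.swap f U * (Equiv.swap B1 B2 * Equiv.swap f V)) := by
    group
  have hC : Commute (Equiv.swap A1 A2)
      (Equiv.swap f U * (Equiv.swap B1 B2 * Equiv.swap f V)) :=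
    c12.mul_right (c13.mul_right c14)
  have h2 : Equiv.swap f U * (Equiv.swap B1 B2 * Equiv.swap f V)
      = Equiv.swap B1 B2 * (Equiv.swap f U * Equiv.swap f V) := by
    rw [← mul_assoc, c32.symm.eq, mul_assoc]
  have hC2 : Commute (Equiv.swap B1 B2) (Equiv.swap f U * Equiv.swap f V) :=
    c32.mul_right c34
  rw [h1, hC.mul_pow, h2, hC2.mul_pow]
  rw [show (Equiv.swap A1 A2) ^ 2 = 1 by rw [sq]; exact Equiv.swap_mul_self _ _]
  rw [show (Equiv.swap B1 B2) ^ 2 = 1 by rw [sq]; exact Equiv.swap_mul_self _ _]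
  rw [one_mul, one_mul, swap_sq hUV hUf hVf]

end TC


namespace TC

open Equiv Equiv.Perm

variable {X : Type*} [DecidableEq X]

variable (A B : Equiv.Perm X)

set_option linter.unusedSectionVars false

/-- `π` is a product of at most `c` generators from `{A, A⁻¹, B, B⁻¹}`. -/
def Good (c : ℕ) (π : Equiv.Perm X) : Prop :=
  ∃ l : List (Equiv.Perm X), l.length ≤ c ∧
    (∀ g ∈ l, g = A ∨ g = A⁻¹ ∨ g = B ∨ g = B⁻¹) ∧ l.prod = π

variable {A B}

theorem good_one (c : ℕ) : Good A B c 1 :=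
  ⟨[], by simp⟩

theorem good_A : Good A B 1 A := ⟨[A], by simp⟩
theorem good_B : Good A B 1 B := ⟨[B], by simp⟩
theorem good_Ainv : Good A B 1 A⁻¹ := ⟨[A⁻¹], by simp⟩
theorem good_Binv : Good A B 1 B⁻¹ := ⟨[B⁻¹], by simp⟩

theorem good_mono {c c' : ℕ} {π : Equiv.Perm X} (h : c ≤ c') (hg : Good A B c π) :
    Good A B c' π := by
  obtain ⟨l, h1, h2, h3⟩ := hg
  exact ⟨l, h1.trans h, h2, h3⟩

theorem good_mul {c₁ c₂ : ℕ} {π ρ : Equiv.Perm X} (h₁ : Good A B c₁ π)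
    (h₂ : Good A B c₂ ρ) : Good A B (c₁ + c₂) (π * ρ) := by
  obtain ⟨l₁, ha1, ha2, ha3⟩ := h₁
  obtain ⟨l₂, hb1, hb2, hb3⟩ := h₂
  refine ⟨l₁ ++ l₂, ?_, ?_, ?_⟩
  · simp only [List.length_append]; omega
  · intro g hg
    rcases List.mem_append.mp hg with h | h
    · exact ha2 g h
    · exact hb2 g h
  · rw [List.prod_append, ha3, hb3]

theorem good_inv {c : ℕ} {π : Equiv.Perm X} (h : Good A B c π) : Good A B c π⁻¹ := by
  obtain ⟨l, h1, h2, h3⟩ := h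
  refine ⟨(l.map Inv.inv).reverse, ?_, ?_, ?_⟩
  · simpa using h1
  · intro g hg
    simp only [List.mem_reverse, List.mem_map] at hg
    obtain ⟨g', hg', rfl⟩ := hg
    rcases h2 g' hg' with h | h | h | h <;> subst h <;> simp
  · rw [List.prod_reverse_noncomm, List.map_map]
    simp only [Function.comp_def, inv_inv, List.map_id']
    rw [h3]

theorem good_pow {c : ℕ} {π : Equiv.Perm X} (h : Good A B c π) (k : ℕ) :
    Good A B (k * c) (π ^ k) := by
  induction k with
  | zero => simpa using good_one 0
  | succ k ih =>
      have := good_mul ih h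
      rw [pow_succ]
      have hc : k * c + c = (k + 1) * c := by ring
      rwa [hc] at this

theorem good_conj {cσ c : ℕ} {σ π : Equiv.Perm X} (hσ : Good A B cσ σ)
    (h : Good A B c π) : Good A B (cσ + c + cσ) (σ * π * σ⁻¹) :=
  good_mul (good_mul hσ h) (good_inv hσ)

/-- Decomposition of an even permutation into at most `N` 3-cycles. -/
theorem decomp [Fintype X] :
    ∀ (N : ℕ) (π : Equiv.Perm X),
      (Finset.univ.filter fun x => π x ≠ x).card ≤ N → Equiv.Perm.sign π = 1 →
      ∃ L : List (X × X × X),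
        L.length ≤ N ∧
        (∀ t ∈ L, t.1 ≠ t.2.1 ∧ t.1 ≠ t.2.2 ∧ t.2.1 ≠ t.2.2) ∧
        (L.map fun t => c3 t.1 t.2.1 t.2.2).prod = π := by
  intro N
  induction N with
  | zero =>
      intro π hcard _
      have : π = 1 := by
        ext x
        by_contra hx
        have hx' : x ∈ Finset.univ.filter fun x => π x ≠ x := by
          simp only [Finset.mem_filter, Finset.mem_univ, true_and]
          simpa using hx
        have := Finset.card_pos.mpr ⟨x, hx'⟩
        omega
      exact ⟨[], by simp [this]⟩
  | succ N ih =>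
      intro π hcard hsign
      by_cases hπ : π = 1
      · exact ⟨[], by simp [hπ]⟩
      · obtain ⟨x, hx⟩ : ∃ x, π x ≠ x := by
          by_contra h
          push_neg at h
          exact hπ (Equiv.ext h)
        set y := π x with hy
        have hyx : y ≠ x := hx
        have hπy : π y ≠ y := fun h => hyx (π.injective (h.trans hy))
        have hz : ∃ z, π z ≠ z ∧ z ≠ x ∧ z ≠ y := by
          by_cases hcase : π y = x
          · by_contra h
            push_neg at h
            have hswap : π = Equiv.swap x y := by
              ext w
              by_cases hwx : w = x
              · simp [hwx, ← hy, Equiv.swap_apply_left]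
              by_cases hwy : w = y
              · simp [hwy, hcase, Equiv.swap_apply_right]
              · rw [Equiv.swap_apply_of_ne_of_ne hwx hwy]
                by_contra hne
                exact hwy (h w hne hwx)
            rw [hswap, Equiv.Perm.sign_swap (Ne.symm hyx)] at hsign
            exact (by norm_num : (-1 : ℤˣ) ≠ 1) hsign
          · exact ⟨π y, fun h => hπy (π.injective h), hcase, hπy⟩
        obtain ⟨z, hzmoved, hzx, hzy⟩ := hz
        have hxy : x ≠ y := Ne.symm hyx
        have hxz : x ≠ z := Ne.symm hzx
        have hyz : y ≠ z := Ne.symm hzy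
        set τ := c3 x y z with hτ
        set π' := τ⁻¹ * π with hπ'
        have hπx : π' x = x := by
          rw [hπ', Equiv.Perm.mul_apply, ← hy, hτ, c3_inv,
            c3_apply hxz hxy (Ne.symm hyz)]
          simp [hyx, hyz, hzy]
        have hmoved : ∀ w, π' w ≠ w → (π w ≠ w ∧ w ≠ x) := by
          intro w hw
          have hwx : w ≠ x := by
            intro h; rw [h] at hw; exact hw hπx
          refine ⟨?_, hwx⟩
          intro hfix
          apply hw
          have hwy : w ≠ y := fun h => hπy (h ▸ hfix)
          have hwz : w ≠ z := fun h => hzmoved (h ▸ hfix)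
          rw [hπ', Equiv.Perm.mul_apply, hfix, hτ, c3_inv,
            c3_apply hxz hxy (Ne.symm hyz)]
          simp [hwx, hwy, hwz]
        have hsub : (Finset.univ.filter fun w => π' w ≠ w) ⊆
            (Finset.univ.filter fun w => π w ≠ w).erase x := by
          intro w hw
          simp only [Finset.mem_filter, Finset.mem_univ, true_and] at hw
          obtain ⟨h1, h2⟩ := hmoved w hw
          simp only [Finset.mem_erase, Finset.mem_filter, Finset.mem_univ, true_and]
          exact ⟨h2, h1⟩
        have hxmem : x ∈ Finset.univ.filter fun w => π w ≠ w := by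
          simp only [Finset.mem_filter, Finset.mem_univ, true_and]; exact hx
        have hcard' : (Finset.univ.filter fun w => π' w ≠ w).card ≤ N := by
          have h1 := Finset.card_le_card hsub
          rw [Finset.card_erase_of_mem hxmem] at h1
          omega
        have hsign' : Equiv.Perm.sign π' = 1 := by
          rw [hπ', map_mul, map_inv, hτ, sign_c3 hxz hxy, hsign]
          norm_num
        obtain ⟨L', hL1, hL2, hL3⟩ := ih π' hcard' hsign'
        refine ⟨(x, y, z) :: L', by simpa using hL1, ?_, ?_⟩
        · intro t ht
          rcases List.mem_cons.mp ht with h | h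
          · rw [h]; exact ⟨hxy, hxz, hyz⟩
          · exact hL2 t h
        · simp only [List.map_cons, List.prod_cons, hL3]
          rw [hπ', ← mul_assoc, ← hτ, mul_inv_cancel, one_mul]

end TC


/-! ### Concrete formulas for the generators -/

namespace TC

open Equiv Equiv.Perm

/-- Model of `α` on values. -/
def fA (a x : ℕ) : ℕ := if x + 1 < a then x + 1 else if x + 1 = a then 0 else x

/-- Model of `β` on values. -/
def fB (a n x : ℕ) : ℕ :=
  if x + 2 < a then x else if x + 1 < n then x + 1 else a - 2

theorem alpha_val {a b : ℕ} (ha : 4 ≤ a) (hb : 5 ≤ b) (x : Fin (a + b - 2)) :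
    ((twoConnAlpha a b x : Fin (a + b - 2)) : ℕ) = fA a (x : ℕ) := by
  have han : a ≤ a + b - 2 := by omega
  set l : List (Fin (a + b - 2)) := (List.finRange (a + b - 2)).take a with hl
  have hlen : l.length = a := by
    simp [hl, List.length_take, List.length_finRange]; omega
  have hnodup : l.Nodup := (List.take_sublist _ _).nodup (List.nodup_finRange (a + b - 2))
  have hget : ∀ (i : ℕ) (h : i < a), (l[i]'(by omega) : Fin (a + b - 2)).val = i := by
    intro i h
    simp [hl, List.getElem_take, List.getElem_finRange]
  by_cases hx : (x : ℕ) < a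
  · have hxeq : x = l[(x : ℕ)]'(by omega) := by
      apply Fin.ext
      rw [hget _ hx]
    rw [twoConnAlpha]
    conv_lhs => rw [hxeq]
    rw [List.formPerm_apply_getElem _ hnodup _ (by omega)]
    have hmod : ((x : ℕ) + 1) % l.length = ((x : ℕ) + 1) % a := by rw [hlen]
    rcases Nat.lt_or_ge ((x : ℕ) + 1) a with h1 | h1
    · have : ((x : ℕ) + 1) % l.length = (x : ℕ) + 1 := by
        rw [hlen, Nat.mod_eq_of_lt h1]
      simp_rw [this]
      rw [hget _ h1, fA, if_pos h1]
    · have h2 : (x : ℕ) + 1 = a := by omega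
      have : ((x : ℕ) + 1) % l.length = 0 := by rw [hlen, h2, Nat.mod_self]
      simp_rw [this]
      rw [hget _ (by omega), fA, if_neg (by omega), if_pos h2]
  · have hxnot : x ∉ l := by
      intro hmem
      obtain ⟨i, hi, hieq⟩ := List.mem_iff_getElem.mp hmem
      rw [hlen] at hi
      have := hget i hi
      rw [hieq] at this
      omega
    rw [twoConnAlpha, List.formPerm_apply_of_notMem hxnot, fA,
      if_neg (by omega), if_neg (by omega)]

theorem beta_val {a b : ℕ} (ha : 4 ≤ a) (hb : 5 ≤ b) (x : Fin (a + b - 2)) :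
    ((twoConnBeta a b x : Fin (a + b - 2)) : ℕ) = fB a (a + b - 2) (x : ℕ) := by
  set l : List (Fin (a + b - 2)) := (List.finRange (a + b - 2)).drop (a - 2) with hl
  have hlen : l.length = b := by
    simp [hl, List.length_drop, List.length_finRange]; omega
  have hnodup : l.Nodup := (List.drop_sublist _ _).nodup (List.nodup_finRange (a + b - 2))
  have hget : ∀ (i : ℕ) (h : i < b), (l[i]'(by omega) : Fin (a + b - 2)).val = a - 2 + i := by
    intro i h
    simp [hl, List.getElem_drop, List.getElem_finRange]
  by_cases hx : a - 2 ≤ (x : ℕ)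
  · have hxlt : (x : ℕ) < a + b - 2 := x.isLt
    have hxeq : x = l[(x : ℕ) - (a - 2)]'(by omega) := by
      apply Fin.ext
      rw [hget _ (by omega)]
      omega
    rw [twoConnBeta]
    conv_lhs => rw [hxeq]
    rw [List.formPerm_apply_getElem _ hnodup _ (by omega)]
    rcases Nat.lt_or_ge ((x : ℕ) + 1) (a + b - 2) with h1 | h1
    · have : ((x : ℕ) - (a - 2) + 1) % l.length = (x : ℕ) - (a - 2) + 1 := by
        rw [hlen, Nat.mod_eq_of_lt (by omega)]
      simp_rw [this]
      rw [hget _ (by omega), fB, if_neg (by omega), if_pos h1]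
      omega
    · have : ((x : ℕ) - (a - 2) + 1) % l.length = 0 := by
        rw [hlen]
        have : (x : ℕ) - (a - 2) + 1 = b := by omega
        rw [this, Nat.mod_self]
      simp_rw [this]
      rw [hget _ (by omega), fB, if_neg (by omega), if_neg (by omega)]
      omega
  · have hxnot : x ∉ l := by
      intro hmem
      obtain ⟨i, hi, hieq⟩ := List.mem_iff_getElem.mp hmem
      rw [hlen] at hi
      have := hget i hi
      rw [hieq] at this
      omega
    rw [twoConnBeta, List.formPerm_apply_of_notMem hxnot, fB,
      if_pos (by omega)]

end TC


/-! ### The derived permutation δ and its orbit -/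

namespace TC

open Equiv Equiv.Perm

def del (a b : ℕ) : Equiv.Perm (Fin (a + b - 2)) :=
  twoConnAlpha a b * (twoConnBeta a b)⁻¹

/-- Model of `β⁻¹` on values. -/
def fBinv (a n x : ℕ) : ℕ := if x + 2 < a then x else if x + 2 = a then n - 1 else x - 1

/-- Model of `δ = α β⁻¹` on values. -/
def fdel (a n x : ℕ) : ℕ :=
  if x + 2 < a then x + 1
  else if x + 2 = a then n - 1
  else if x + 1 = a then a - 1
  else if x = a then 0
  else x - 1

/-- Orbit position model. -/
def fP (a n i : ℕ) : ℕ := if i ≤ a - 2 then i else n + a - 2 - i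

theorem betainv_val {a b : ℕ} (ha : 4 ≤ a) (hb : 5 ≤ b) (x : Fin (a + b - 2)) :
    (((twoConnBeta a b)⁻¹ x : Fin (a + b - 2)) : ℕ) = fBinv a (a + b - 2) (x : ℕ) := by
  have hbnd : fBinv a (a + b - 2) (x : ℕ) < a + b - 2 := by
    have := x.isLt
    unfold fBinv; split_ifs <;> omega
  have key : twoConnBeta a b ⟨fBinv a (a + b - 2) (x : ℕ), hbnd⟩ = x := by
    apply Fin.ext
    rw [beta_val ha hb]
    have := x.isLt
    simp only [fB, fBinv]
    split_ifs <;> omega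
  conv_lhs => rw [← key]
  rw [← Equiv.Perm.mul_apply, inv_mul_cancel, Equiv.Perm.one_apply]

theorem del_val {a b : ℕ} (ha : 4 ≤ a) (hb : 5 ≤ b) (x : Fin (a + b - 2)) :
    ((del a b x : Fin (a + b - 2)) : ℕ) = fdel a (a + b - 2) (x : ℕ) := by
  rw [del, Equiv.Perm.mul_apply, alpha_val ha hb, betainv_val ha hb]
  have := x.isLt
  simp only [fA, fBinv, fdel]
  split_ifs <;> omega

theorem del_fix {a b : ℕ} (ha : 4 ≤ a) (hb : 5 ≤ b) (x : Fin (a + b - 2))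
    (hx : (x : ℕ) = a - 1) : del a b x = x := by
  apply Fin.ext
  rw [del_val ha hb, hx, fdel]
  split_ifs <;> omega

theorem delpow_fix {a b : ℕ} (ha : 4 ≤ a) (hb : 5 ≤ b) (x : Fin (a + b - 2))
    (hx : (x : ℕ) = a - 1) (i : ℕ) : ((del a b) ^ i) x = x := by
  induction i with
  | zero => simp
  | succ i ih =>
      rw [pow_succ, Equiv.Perm.mul_apply, del_fix ha hb x hx, ih]

theorem PP_val {a b : ℕ} (ha : 4 ≤ a) (hb : 5 ≤ b) (x0 : Fin (a + b - 2))
    (hx0 : (x0 : ℕ) = 0) :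
    ∀ i, i < a + b - 3 → ((((del a b) ^ i) x0 : Fin (a + b - 2)) : ℕ) = fP a (a + b - 2) i := by
  intro i
  induction i with
  | zero => intro _; simpa [fP] using hx0
  | succ i ih =>
      intro hi
      have hstep : ((del a b) ^ (i + 1)) x0 = del a b (((del a b) ^ i) x0) := by
        rw [pow_succ', Equiv.Perm.mul_apply]
      rw [hstep, del_val ha hb, ih (by omega)]
      simp only [fdel, fP]
      split_ifs <;> omega

theorem del_order {a b : ℕ} (ha : 4 ≤ a) (hb : 5 ≤ b) (x0 : Fin (a + b - 2))
    (hx0 : (x0 : ℕ) = 0) : ((del a b) ^ (a + b - 3)) x0 = x0 := by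
  have h1 : ((del a b) ^ (a + b - 3)) x0 = del a b (((del a b) ^ (a + b - 4)) x0) := by
    have heq : a + b - 3 = (a + b - 4) + 1 := by omega
    rw [heq, pow_succ', Equiv.Perm.mul_apply]
  rw [h1]
  apply Fin.ext
  rw [del_val ha hb, PP_val ha hb x0 hx0 _ (by omega), hx0]
  simp only [fdel, fP]
  split_ifs <;> omega

theorem del_pow_m {a b : ℕ} (ha : 4 ≤ a) (hb : 5 ≤ b) :
    (del a b) ^ (a + b - 3) = 1 := by
  have hx0lt : 0 < a + b - 2 := by omega
  set x0 : Fin (a + b - 2) := ⟨0, hx0lt⟩ with hx0def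
  have hx0 : (x0 : ℕ) = 0 := rfl
  apply Equiv.ext
  intro x
  simp only [Equiv.Perm.one_apply]
  by_cases hf : (x : ℕ) = a - 1
  · exact delpow_fix ha hb x hf _
  · -- x is in the orbit of x0
    have hxlt := x.isLt
    set i : ℕ := if (x : ℕ) ≤ a - 2 then (x : ℕ) else (a + b - 2) + a - 2 - (x : ℕ) with hidef
    have hilt : i < a + b - 3 := by rw [hidef]; split_ifs <;> omega
    have hxi : ((del a b) ^ i) x0 = x := by
      apply Fin.ext
      rw [PP_val ha hb x0 hx0 i hilt]
      rw [hidef, fP]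
      split_ifs <;> omega
    rw [← hxi, ← Equiv.Perm.mul_apply, ← pow_add]
    have heq : a + b - 3 + i = i + (a + b - 3) := by omega
    rw [heq, pow_add, Equiv.Perm.mul_apply, del_order ha hb x0 hx0]

theorem PP_add_m {a b : ℕ} (ha : 4 ≤ a) (hb : 5 ≤ b) (x0 : Fin (a + b - 2)) (i : ℕ) :
    ((del a b) ^ (i + (a + b - 3))) x0 = ((del a b) ^ i) x0 := by
  rw [pow_add, Equiv.Perm.mul_apply, del_pow_m ha hb]
  simp

end TC


/-! ### The commutator gadget -/

namespace TC

open Equiv Equiv.Perm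

theorem swap_val {n : ℕ} (u v x : Fin n) :
    ((Equiv.swap u v x : Fin n) : ℕ) =
      if (x : ℕ) = (u : ℕ) then (v : ℕ) else if (x : ℕ) = (v : ℕ) then (u : ℕ) else (x : ℕ) := by
  simp only [Equiv.swap_apply_def]
  split_ifs with h1 h2 <;> simp_all [Fin.ext_iff]

/-- abbreviation for the orbit point `δ^i 0`. -/
def PP (a b : ℕ) (x0 : Fin (a + b - 2)) (i : ℕ) : Fin (a + b - 2) :=
  ((del a b) ^ i) x0

theorem PP_shift {a b : ℕ} (x0 : Fin (a + b - 2)) (k i : ℕ) :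
    ((del a b) ^ k) (PP a b x0 i) = PP a b x0 (k + i) := by
  rw [PP, PP, ← Equiv.Perm.mul_apply, ← pow_add]

theorem PP_sub {a b : ℕ} (ha : 4 ≤ a) (hb : 5 ≤ b) (x0 : Fin (a + b - 2))
    (hx0 : (x0 : ℕ) = 0) (i : ℕ) (h : a + b - 3 ≤ i) :
    PP a b x0 i = PP a b x0 (i - (a + b - 3)) := by
  have heq : i = (i - (a + b - 3)) + (a + b - 3) := by omega
  conv_lhs => rw [PP, heq]
  rw [PP_add_m ha hb]
  rfl

theorem PP_valm {a b : ℕ} (ha : 4 ≤ a) (hb : 5 ≤ b) (x0 : Fin (a + b - 2))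
    (hx0 : (x0 : ℕ) = 0) (i : ℕ) (h : i < a + b - 3) :
    ((PP a b x0 i : Fin (a + b - 2)) : ℕ) = fP a (a + b - 2) i :=
  PP_val ha hb x0 hx0 i h

set_option maxHeartbeats 2000000 in
/-- Distinctness of orbit points, for indices below `3m`. -/
theorem PP_ne {a b : ℕ} (ha : 4 ≤ a) (hb : 5 ≤ b) (x0 : Fin (a + b - 2))
    (hx0 : (x0 : ℕ) = 0) (i j : ℕ)
    (hi : i < 4 * (a + b - 3)) (hj : j < 4 * (a + b - 3))
    (h1 : i ≠ j) (h2 : i + (a + b - 3) ≠ j) (h3 : i + 2 * (a + b - 3) ≠ j)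
    (h3' : i + 3 * (a + b - 3) ≠ j)
    (h4 : j + (a + b - 3) ≠ i) (h5 : j + 2 * (a + b - 3) ≠ i)
    (h5' : j + 3 * (a + b - 3) ≠ i) :
    PP a b x0 i ≠ PP a b x0 j := by
  have hm : 6 ≤ a + b - 3 := by omega
  have red : ∀ k, k < 4 * (a + b - 3) → ∃ k', k' < a + b - 3 ∧ PP a b x0 k = PP a b x0 k' ∧
      (k' = k ∨ k' + (a + b - 3) = k ∨ k' + 2 * (a + b - 3) = k ∨ k' + 3 * (a + b - 3) = k) := by
    intro k hk
    rcases Nat.lt_or_ge k (a + b - 3) with h | h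
    · exact ⟨k, h, rfl, Or.inl rfl⟩
    rcases Nat.lt_or_ge k (2 * (a + b - 3)) with h' | h'
    · exact ⟨k - (a + b - 3), by omega, PP_sub ha hb x0 hx0 k h, Or.inr (Or.inl (by omega))⟩
    rcases Nat.lt_or_ge k (3 * (a + b - 3)) with h'' | h''
    · refine ⟨k - 2 * (a + b - 3), by omega, ?_, Or.inr (Or.inr (Or.inl (by omega)))⟩
      rw [PP_sub ha hb x0 hx0 k (by omega), PP_sub ha hb x0 hx0 _ (by omega)]
      congr 1
      omega
    · refine ⟨k - 3 * (a + b - 3), by omega, ?_, Or.inr (Or.inr (Or.inr (by omega)))⟩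
      rw [PP_sub ha hb x0 hx0 k (by omega), PP_sub ha hb x0 hx0 _ (by omega),
        PP_sub ha hb x0 hx0 _ (by omega)]
      congr 1
      omega
  obtain ⟨i', hi', hieq, hicase⟩ := red i hi
  obtain ⟨j', hj', hjeq, hjcase⟩ := red j hj
  rw [hieq, hjeq]
  intro hcon
  have hne : i' ≠ j' := by omega
  have hval := congrArg (fun w : Fin (a + b - 2) => (w : ℕ)) hcon
  simp only [PP_valm ha hb x0 hx0 _ hi', PP_valm ha hb x0 hx0 _ hj'] at hval
  rw [fP, fP] at hval
  split_ifs at hval <;> omega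

theorem PP_ne_f {a b : ℕ} (ha : 4 ≤ a) (hb : 5 ≤ b) (x0 f : Fin (a + b - 2))
    (hx0 : (x0 : ℕ) = 0) (hf : (f : ℕ) = a - 1) (i : ℕ) (hi : i < 4 * (a + b - 3)) :
    PP a b x0 i ≠ f := by
  have hm : 6 ≤ a + b - 3 := by omega
  have red : ∃ k', k' < a + b - 3 ∧ PP a b x0 i = PP a b x0 k' := by
    rcases Nat.lt_or_ge i (a + b - 3) with h | h
    · exact ⟨i, h, rfl⟩
    rcases Nat.lt_or_ge i (2 * (a + b - 3)) with h' | h'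
    · exact ⟨i - (a + b - 3), by omega, PP_sub ha hb x0 hx0 i h⟩
    rcases Nat.lt_or_ge i (3 * (a + b - 3)) with h'' | h''
    · refine ⟨i - 2 * (a + b - 3), by omega, ?_⟩
      rw [PP_sub ha hb x0 hx0 i (by omega), PP_sub ha hb x0 hx0 _ (by omega)]
      congr 1
      omega
    · refine ⟨i - 3 * (a + b - 3), by omega, ?_⟩
      rw [PP_sub ha hb x0 hx0 i (by omega), PP_sub ha hb x0 hx0 _ (by omega),
        PP_sub ha hb x0 hx0 _ (by omega)]
      congr 1
      omega
  obtain ⟨i', hi', hieq⟩ := red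
  rw [hieq]
  intro hcon
  have hval := congrArg (fun w : Fin (a + b - 2) => (w : ℕ)) hcon
  simp only [PP_valm ha hb x0 hx0 _ hi', hf] at hval
  rw [fP] at hval
  split_ifs at hval <;> omega

theorem f_fixed_pow {a b : ℕ} (ha : 4 ≤ a) (hb : 5 ≤ b) (f : Fin (a + b - 2))
    (hf : (f : ℕ) = a - 1) (i : ℕ) : ((del a b) ^ i) f = f :=
  delpow_fix ha hb f hf i

set_option maxHeartbeats 4000000 in
/-- The commutator `d = α β α⁻¹ β⁻¹` as a product of two transpositions. -/
theorem d_eq {a b : ℕ} (ha : 4 ≤ a) (hb : 5 ≤ b) (x0 f : Fin (a + b - 2))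
    (hx0 : (x0 : ℕ) = 0) (hf : (f : ℕ) = a - 1) :
    twoConnAlpha a b * twoConnBeta a b * (twoConnAlpha a b)⁻¹ * (twoConnBeta a b)⁻¹ =
      Equiv.swap (PP a b x0 0) (PP a b x0 (a + b - 4)) *
        Equiv.swap (PP a b x0 (a - 2)) f := by
  have hm : 6 ≤ a + b - 3 := by omega
  have hfAinv : ∀ x : Fin (a + b - 2), (((twoConnAlpha a b)⁻¹ x : Fin (a + b - 2)) : ℕ) =
      if (x : ℕ) = 0 then a - 1 else if (x : ℕ) < a then (x : ℕ) - 1 else (x : ℕ) := by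
    intro x
    have hbnd : (if (x : ℕ) = 0 then a - 1 else if (x : ℕ) < a then (x : ℕ) - 1 else (x : ℕ))
        < a + b - 2 := by
      have := x.isLt; split_ifs <;> omega
    have key : twoConnAlpha a b ⟨_, hbnd⟩ = x := by
      apply Fin.ext
      rw [alpha_val ha hb]
      have := x.isLt
      simp only [fA]
      split_ifs <;> omega
    conv_lhs => rw [← key]
    rw [← Equiv.Perm.mul_apply, inv_mul_cancel, Equiv.Perm.one_apply]
  have hP0 : ((PP a b x0 0 : Fin (a + b - 2)) : ℕ) = 0 := by
    rw [PP_valm ha hb x0 hx0 0 (by omega), fP]; split_ifs <;> omega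
  have hPm1 : ((PP a b x0 (a + b - 4) : Fin (a + b - 2)) : ℕ) = a := by
    rw [PP_valm ha hb x0 hx0 _ (by omega), fP]; split_ifs <;> omega
  have hPa2 : ((PP a b x0 (a - 2) : Fin (a + b - 2)) : ℕ) = a - 2 := by
    rw [PP_valm ha hb x0 hx0 _ (by omega), fP]; split_ifs <;> omega
  apply Equiv.ext
  intro x
  apply Fin.ext
  simp only [Equiv.Perm.mul_apply]
  rw [alpha_val ha hb, beta_val ha hb, hfAinv, betainv_val ha hb,
    swap_val, swap_val, hP0, hPm1, hPa2, hf]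
  have hxlt := x.isLt
  unfold fA fB fBinv
  by_cases c1 : (x : ℕ) + 2 < a
  · rw [if_pos c1]
    by_cases c2 : (x : ℕ) = 0
    · rw [if_pos c2, if_neg (by omega : ¬(a - 1 + 2 < a)), if_pos (by omega : a - 1 + 1 < a + b - 2)]
      split_ifs <;> omega
    · rw [if_neg c2, if_pos (by omega : (x : ℕ) < a), if_pos (by omega : (x : ℕ) - 1 + 2 < a)]
      split_ifs <;> omega
  · by_cases c2 : (x : ℕ) + 2 = a
    · rw [if_neg c1, if_pos c2, if_neg (by omega : ¬(a + b - 2 - 1 = 0)),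
        if_neg (by omega : ¬(a + b - 2 - 1 < a)), if_neg (by omega : ¬(a + b - 2 - 1 + 2 < a)),
        if_neg (by omega : ¬(a + b - 2 - 1 + 1 < a + b - 2))]
      split_ifs <;> omega
    · rw [if_neg c1, if_neg c2]
      by_cases c3 : (x : ℕ) = a - 1
      · rw [if_neg (by omega : ¬((x : ℕ) - 1 = 0)), if_pos (by omega : (x : ℕ) - 1 < a),
          if_pos (by omega : (x : ℕ) - 1 - 1 + 2 < a)]
        split_ifs <;> omega
      · by_cases c4 : (x : ℕ) = a
        · rw [if_neg (by omega : ¬((x : ℕ) - 1 = 0)), if_pos (by omega : (x : ℕ) - 1 < a),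
            if_neg (by omega : ¬((x : ℕ) - 1 - 1 + 2 < a)),
            if_pos (by omega : (x : ℕ) - 1 - 1 + 1 < a + b - 2)]
          split_ifs <;> omega
        · rw [if_neg (by omega : ¬((x : ℕ) - 1 = 0)), if_neg (by omega : ¬((x : ℕ) - 1 < a)),
            if_neg (by omega : ¬((x : ℕ) - 1 + 2 < a)),
            if_pos (by omega : (x : ℕ) - 1 + 1 < a + b - 2)]
          split_ifs <;> omega

end TC


/-! ### Good-ness of the gadget 3-cycles -/

namespace TC

open Equiv Equiv.Perm

theorem conj_mul {X : Type*} (σ s t : Equiv.Perm X) :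
    σ * (s * t) * σ⁻¹ = (σ * s * σ⁻¹) * (σ * t * σ⁻¹) := by group

section Gadget

variable {a b : ℕ}

theorem good_del (ha : 4 ≤ a) (hb : 5 ≤ b) :
    Good (twoConnAlpha a b) (twoConnBeta a b) 2 (del a b) :=
  good_mul good_A good_Binv

theorem good_d (ha : 4 ≤ a) (hb : 5 ≤ b) :
    Good (twoConnAlpha a b) (twoConnBeta a b) 4
      (twoConnAlpha a b * twoConnBeta a b * (twoConnAlpha a b)⁻¹ * (twoConnBeta a b)⁻¹) :=
  good_mul (good_mul (good_mul good_A good_B) good_Ainv) good_Binv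

theorem pt_eval (ha : 4 ≤ a) (hb : 5 ≤ b) (x0 f : Fin (a + b - 2))
    (hx0 : (x0 : ℕ) = 0) (hf : (f : ℕ) = a - 1) :
    twoConnAlpha a b (PP a b x0 0) = PP a b x0 1 ∧
    twoConnAlpha a b (PP a b x0 (a + b - 4)) = PP a b x0 (a + b - 4) ∧
    twoConnAlpha a b (PP a b x0 (a - 2)) = f ∧
    twoConnAlpha a b f = PP a b x0 0 ∧
    twoConnBeta a b (PP a b x0 0) = PP a b x0 0 ∧
    twoConnBeta a b (PP a b x0 (a + b - 4)) = PP a b x0 (a + b - 5) ∧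
    twoConnBeta a b (PP a b x0 (a - 2)) = f ∧
    twoConnBeta a b f = PP a b x0 (a + b - 4) := by
  have h0 : ((PP a b x0 0 : Fin (a + b - 2)) : ℕ) = 0 := by
    rw [PP_valm ha hb x0 hx0 0 (by omega), fP]; split_ifs <;> omega
  have h1 : ((PP a b x0 1 : Fin (a + b - 2)) : ℕ) = 1 := by
    rw [PP_valm ha hb x0 hx0 1 (by omega), fP]; split_ifs <;> omega
  have h2 : ((PP a b x0 (a + b - 4) : Fin (a + b - 2)) : ℕ) = a := by
    rw [PP_valm ha hb x0 hx0 _ (by omega), fP]; split_ifs <;> omega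
  have h3 : ((PP a b x0 (a + b - 5) : Fin (a + b - 2)) : ℕ) = a + 1 := by
    rw [PP_valm ha hb x0 hx0 _ (by omega), fP]; split_ifs <;> omega
  have h4 : ((PP a b x0 (a - 2) : Fin (a + b - 2)) : ℕ) = a - 2 := by
    rw [PP_valm ha hb x0 hx0 _ (by omega), fP]; split_ifs <;> omega
  refine ⟨?_, ?_, ?_, ?_, ?_, ?_, ?_, ?_⟩ <;> apply Fin.ext
  · rw [alpha_val ha hb, h0, h1]; simp only [fA]; split_ifs <;> omega
  · rw [alpha_val ha hb, h2]; simp only [fA]; split_ifs <;> omega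
  · rw [alpha_val ha hb, h4, hf]; simp only [fA]; split_ifs <;> omega
  · rw [alpha_val ha hb, hf, h0]; simp only [fA]; split_ifs <;> omega
  · rw [beta_val ha hb, h0]; simp only [fB]; split_ifs <;> omega
  · rw [beta_val ha hb, h2, h3]; simp only [fB]; split_ifs <;> omega
  · rw [beta_val ha hb, h4, hf]; simp only [fB]; split_ifs <;> omega
  · rw [beta_val ha hb, hf, h2]; simp only [fB]; split_ifs <;> omega


theorem dp_eq (ha : 4 ≤ a) (hb : 5 ≤ b) (x0 f : Fin (a + b - 2))
    (hx0 : (x0 : ℕ) = 0) (hf : (f : ℕ) = a - 1) :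
    twoConnAlpha a b *
        (twoConnAlpha a b * twoConnBeta a b * (twoConnAlpha a b)⁻¹ * (twoConnBeta a b)⁻¹) *
        (twoConnAlpha a b)⁻¹ =
      Equiv.swap (PP a b x0 1) (PP a b x0 (a + b - 4)) * Equiv.swap f (PP a b x0 0) := by
  obtain ⟨e1, e2, e3, e4, _, _, _, _⟩ := pt_eval ha hb x0 f hx0 hf
  rw [d_eq ha hb x0 f hx0 hf, conj_mul, ← Equiv.swap_apply_apply, ← Equiv.swap_apply_apply,
    e1, e2, e3, e4]

theorem dpp_eq (ha : 4 ≤ a) (hb : 5 ≤ b) (x0 f : Fin (a + b - 2))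
    (hx0 : (x0 : ℕ) = 0) (hf : (f : ℕ) = a - 1) :
    twoConnBeta a b *
        (twoConnAlpha a b * twoConnBeta a b * (twoConnAlpha a b)⁻¹ * (twoConnBeta a b)⁻¹) *
        (twoConnBeta a b)⁻¹ =
      Equiv.swap (PP a b x0 0) (PP a b x0 (a + b - 5)) *
        Equiv.swap f (PP a b x0 (a + b - 4)) := by
  obtain ⟨_, _, _, _, e5, e6, e7, e8⟩ := pt_eval ha hb x0 f hx0 hf
  rw [d_eq ha hb x0 f hx0 hf, conj_mul, ← Equiv.swap_apply_apply, ← Equiv.swap_apply_apply,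
    e5, e6, e7, e8]

set_option maxHeartbeats 1000000 in
/-- The gadget: for positions `u v` whose difference avoids `{0,±1,±2}` mod `m`,
the 3-cycle `(f, P_u, P_v)` is a short word. -/
theorem good_gadget (ha : 4 ≤ a) (hb : 5 ≤ b) (x0 f : Fin (a + b - 2))
    (hx0 : (x0 : ℕ) = 0) (hf : (f : ℕ) = a - 1)
    (u v : ℕ) (hu : u < a + b - 3) (hv : v < a + b - 3)
    (hc1 : v ≠ u)
    (hc2 : v ≠ u + 1) (hc2' : v + (a + b - 3) ≠ u + 1)
    (hc3 : u ≠ v + 1) (hc3' : u + (a + b - 3) ≠ v + 1)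
    (hc4 : v ≠ u + 2) (hc4' : v + (a + b - 3) ≠ u + 2)
    (hc5 : u ≠ v + 2) (hc5' : u + (a + b - 3) ≠ v + 2) :
    Good (twoConnAlpha a b) (twoConnBeta a b) (16 * (a + b - 3) + 16)
      (c3 f (PP a b x0 u) (PP a b x0 v)) := by
  have hm : 6 ≤ a + b - 3 := by omega
  -- Good-ness of the two conjugated double transpositions
  have g1 : Good (twoConnAlpha a b) (twoConnBeta a b) 6
      (Equiv.swap (PP a b x0 1) (PP a b x0 (a + b - 4)) * Equiv.swap f (PP a b x0 0)) := by
    rw [← dp_eq ha hb x0 f hx0 hf]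
    exact good_mul (good_mul good_A (good_d ha hb)) good_Ainv
  have g2 : Good (twoConnAlpha a b) (twoConnBeta a b) 6
      (Equiv.swap (PP a b x0 0) (PP a b x0 (a + b - 5)) *
        Equiv.swap f (PP a b x0 (a + b - 4))) := by
    rw [← dpp_eq ha hb x0 f hx0 hf]
    exact good_mul (good_mul good_B (good_d ha hb)) good_Binv
  have gX1 : Good (twoConnAlpha a b) (twoConnBeta a b) (u * 2 + 6 + u * 2)
      (Equiv.swap (PP a b x0 (u + 1)) (PP a b x0 (u + (a + b - 4))) *
        Equiv.swap f (PP a b x0 (u + 0))) := by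
    have hg := good_conj (good_pow (good_del ha hb) u) g1
    rwa [conj_mul, ← Equiv.swap_apply_apply, ← Equiv.swap_apply_apply,
      PP_shift, PP_shift, PP_shift, f_fixed_pow ha hb f hf] at hg
  have gX2 : Good (twoConnAlpha a b) (twoConnBeta a b) ((v + 1) * 2 + 6 + (v + 1) * 2)
      (Equiv.swap (PP a b x0 (v + 1 + 0)) (PP a b x0 (v + 1 + (a + b - 5))) *
        Equiv.swap f (PP a b x0 (v + 1 + (a + b - 4)))) := by
    have hg := good_conj (good_pow (good_del ha hb) (v + 1)) g2
    rwa [conj_mul, ← Equiv.swap_apply_apply, ← Equiv.swap_apply_apply,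
      PP_shift, PP_shift, PP_shift, f_fixed_pow ha hb f hf] at hg
  have hidx1 : v + 1 + (a + b - 4) = v + (a + b - 3) := by omega
  have hidx2 : PP a b x0 (v + (a + b - 3)) = PP a b x0 v := by
    rw [PP, PP, PP_add_m ha hb]
  rw [hidx1, hidx2] at gX2
  have gprod := good_pow (good_mul gX1 gX2) 2
  -- identify the permutation
  have hval :
      (Equiv.swap (PP a b x0 (u + 1)) (PP a b x0 (u + (a + b - 4))) *
        Equiv.swap f (PP a b x0 (u + 0)) *
        (Equiv.swap (PP a b x0 (v + 1 + 0)) (PP a b x0 (v + 1 + (a + b - 5))) *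
          Equiv.swap f (PP a b x0 v))) ^ 2 = c3 f (PP a b x0 u) (PP a b x0 v) := by
    have e0 : v + 1 + 0 = v + 1 := by omega
    have e0' : u + 0 = u := by omega
    have e1 : v + 1 + (a + b - 5) = v + (a + b - 4) := by omega
    rw [e0, e0', e1]
    apply gadget_core
    · exact PP_ne ha hb x0 hx0 u v (by omega) (by omega) (by omega) (by omega) (by omega)
        (by omega) (by omega) (by omega) (by omega)
    · exact PP_ne_f ha hb x0 f hx0 hf u (by omega)
    · exact PP_ne_f ha hb x0 f hx0 hf v (by omega)
    · exact PP_ne_f ha hb x0 f hx0 hf (u + 1) (by omega)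
    · exact PP_ne ha hb x0 hx0 (u + 1) u (by omega) (by omega) (by omega) (by omega)
        (by omega) (by omega) (by omega) (by omega) (by omega)
    · exact PP_ne ha hb x0 hx0 (u + 1) (v + 1) (by omega) (by omega) (by omega) (by omega)
        (by omega) (by omega) (by omega) (by omega) (by omega)
    · exact PP_ne ha hb x0 hx0 (u + 1) (v + (a + b - 4)) (by omega) (by omega) (by omega)
        (by omega) (by omega) (by omega) (by omega) (by omega) (by omega)
    · exact PP_ne ha hb x0 hx0 (u + 1) v (by omega) (by omega) (by omega) (by omega)
        (by omega) (by omega) (by omega) (by omega) (by omega)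
    · exact PP_ne_f ha hb x0 f hx0 hf (u + (a + b - 4)) (by omega)
    · exact PP_ne ha hb x0 hx0 (u + (a + b - 4)) u (by omega) (by omega) (by omega)
        (by omega) (by omega) (by omega) (by omega) (by omega) (by omega)
    · exact PP_ne ha hb x0 hx0 (u + (a + b - 4)) (v + 1) (by omega) (by omega) (by omega)
        (by omega) (by omega) (by omega) (by omega) (by omega) (by omega)
    · exact PP_ne ha hb x0 hx0 (u + (a + b - 4)) (v + (a + b - 4)) (by omega) (by omega)
        (by omega) (by omega) (by omega) (by omega) (by omega) (by omega) (by omega)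
    · exact PP_ne ha hb x0 hx0 (u + (a + b - 4)) v (by omega) (by omega) (by omega)
        (by omega) (by omega) (by omega) (by omega) (by omega) (by omega)
    · exact PP_ne_f ha hb x0 f hx0 hf (v + 1) (by omega)
    · exact PP_ne ha hb x0 hx0 (v + 1) u (by omega) (by omega) (by omega) (by omega)
        (by omega) (by omega) (by omega) (by omega) (by omega)
    · exact PP_ne ha hb x0 hx0 (v + 1) v (by omega) (by omega) (by omega) (by omega)
        (by omega) (by omega) (by omega) (by omega) (by omega)
    · exact PP_ne_f ha hb x0 f hx0 hf (v + (a + b - 4)) (by omega)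
    · exact PP_ne ha hb x0 hx0 (v + (a + b - 4)) u (by omega) (by omega) (by omega)
        (by omega) (by omega) (by omega) (by omega) (by omega) (by omega)
    · exact PP_ne ha hb x0 hx0 (v + (a + b - 4)) v (by omega) (by omega) (by omega)
        (by omega) (by omega) (by omega) (by omega) (by omega) (by omega)
  rw [hval] at gprod
  refine good_mono ?_ gprod
  omega

end Gadget

end TC


/-! ### Supply of all 3-cycles through f -/

namespace TC

open Equiv Equiv.Perm

theorem good_extend {X : Type*} [DecidableEq X] {A B : Equiv.Perm X} {f x y z : X}
    (hxy : x ≠ y) (hxz : x ≠ z) (hyz : y ≠ z)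
    (hfx : f ≠ x) (hfy : f ≠ y) (hfz : f ≠ z) {c1 c2 : ℕ}
    (h1 : Good A B c1 (c3 f x y)) (h2 : Good A B c2 (c3 f y z)) :
    Good A B (c2 + c1 + c2) (c3 f x z) := by
  rw [c3_extend hxy hxz hyz hfx hfy hfz]
  exact good_mul (good_mul (good_inv h2) (good_inv h1)) h2

section Supply

variable {a b : ℕ}

theorem PP_red (ha : 4 ≤ a) (hb : 5 ≤ b) (x0 : Fin (a + b - 2)) (hx0 : (x0 : ℕ) = 0)
    (k : ℕ) (hk : k < 4 * (a + b - 3)) :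
    ∃ k', k' < a + b - 3 ∧ PP a b x0 k = PP a b x0 k' ∧
      (k' = k ∨ k' + (a + b - 3) = k ∨ k' + 2 * (a + b - 3) = k ∨ k' + 3 * (a + b - 3) = k) := by
  rcases Nat.lt_or_ge k (a + b - 3) with h | h
  · exact ⟨k, h, rfl, Or.inl rfl⟩
  rcases Nat.lt_or_ge k (2 * (a + b - 3)) with h' | h'
  · exact ⟨k - (a + b - 3), by omega, PP_sub ha hb x0 hx0 k h, Or.inr (Or.inl (by omega))⟩
  rcases Nat.lt_or_ge k (3 * (a + b - 3)) with h'' | h''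
  · refine ⟨k - 2 * (a + b - 3), by omega, ?_, Or.inr (Or.inr (Or.inl (by omega)))⟩
    rw [PP_sub ha hb x0 hx0 k (by omega), PP_sub ha hb x0 hx0 _ (by omega)]
    congr 1
    omega
  · refine ⟨k - 3 * (a + b - 3), by omega, ?_, Or.inr (Or.inr (Or.inr (by omega)))⟩
    rw [PP_sub ha hb x0 hx0 k (by omega), PP_sub ha hb x0 hx0 _ (by omega),
      PP_sub ha hb x0 hx0 _ (by omega)]
    congr 1
    omega

theorem gadget_t (ha : 4 ≤ a) (hb : 5 ≤ b) (x0 f : Fin (a + b - 2))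
    (hx0 : (x0 : ℕ) = 0) (hf : (f : ℕ) = a - 1)
    (u s : ℕ) (hu : u < 3 * (a + b - 3)) (hs1 : 3 ≤ s) (hs2 : s ≤ a + b - 6) :
    Good (twoConnAlpha a b) (twoConnBeta a b) (16 * (a + b - 3) + 16)
      (c3 f (PP a b x0 u) (PP a b x0 (u + s))) := by
  have hm : 6 ≤ a + b - 3 := by omega
  obtain ⟨u', hu', hPu, hucase⟩ := PP_red ha hb x0 hx0 u (by omega)
  obtain ⟨w, hw, hPw, hwcase⟩ := PP_red ha hb x0 hx0 (u + s) (by omega)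
  rw [hPu, hPw]
  exact good_gadget ha hb x0 f hx0 hf u' w hu' hw (by omega) (by omega) (by omega)
    (by omega) (by omega) (by omega) (by omega) (by omega) (by omega)

theorem chain2 (ha : 4 ≤ a) (hb : 5 ≤ b) (x0 f : Fin (a + b - 2))
    (hx0 : (x0 : ℕ) = 0) (hf : (f : ℕ) = a - 1)
    (u s1 s2 : ℕ) (hu : u < a + b - 3) (h11 : 3 ≤ s1) (h12 : s1 ≤ a + b - 6)
    (h21 : 3 ≤ s2) (h22 : s2 ≤ a + b - 6) (hs : s1 + s2 ≠ a + b - 3) :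
    Good (twoConnAlpha a b) (twoConnBeta a b) (3 * (16 * (a + b - 3) + 16))
      (c3 f (PP a b x0 u) (PP a b x0 (u + s1 + s2))) := by
  have hm : 6 ≤ a + b - 3 := by omega
  have h1 := gadget_t ha hb x0 f hx0 hf u s1 (by omega) h11 h12
  have h2 := gadget_t ha hb x0 f hx0 hf (u + s1) s2 (by omega) h21 h22
  refine good_mono (by omega) (good_extend ?_ ?_ ?_ ?_ ?_ ?_ h1 h2)
  · exact PP_ne ha hb x0 hx0 u (u + s1) (by omega) (by omega) (by omega) (by omega)
      (by omega) (by omega) (by omega) (by omega) (by omega)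
  · exact PP_ne ha hb x0 hx0 u (u + s1 + s2) (by omega) (by omega) (by omega) (by omega)
      (by omega) (by omega) (by omega) (by omega) (by omega)
  · exact PP_ne ha hb x0 hx0 (u + s1) (u + s1 + s2) (by omega) (by omega) (by omega)
      (by omega) (by omega) (by omega) (by omega) (by omega) (by omega)
  · exact (PP_ne_f ha hb x0 f hx0 hf u (by omega)).symm
  · exact (PP_ne_f ha hb x0 f hx0 hf (u + s1) (by omega)).symm
  · exact (PP_ne_f ha hb x0 f hx0 hf (u + s1 + s2) (by omega)).symm

theorem chain3 (ha : 4 ≤ a) (hb : 5 ≤ b) (x0 f : Fin (a + b - 2))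
    (hx0 : (x0 : ℕ) = 0) (hf : (f : ℕ) = a - 1)
    (u s1 s2 s3 : ℕ) (hu : u < a + b - 3) (h11 : 3 ≤ s1) (h12 : s1 ≤ a + b - 6)
    (h21 : 3 ≤ s2) (h22 : s2 ≤ a + b - 6) (h31 : 3 ≤ s3) (h32 : s3 ≤ a + b - 6)
    (hs : s1 + s2 ≠ a + b - 3) (hs' : s1 + s2 + s3 ≠ a + b - 3)
    (hs'' : s1 + s2 + s3 ≠ 2 * (a + b - 3)) :
    Good (twoConnAlpha a b) (twoConnBeta a b) (5 * (16 * (a + b - 3) + 16))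
      (c3 f (PP a b x0 u) (PP a b x0 (u + s1 + s2 + s3))) := by
  have hm : 6 ≤ a + b - 3 := by omega
  have h1 := chain2 ha hb x0 f hx0 hf u s1 s2 hu h11 h12 h21 h22 hs
  have h2 := gadget_t ha hb x0 f hx0 hf (u + s1 + s2) s3 (by omega) h31 h32
  refine good_mono (by omega) (good_extend ?_ ?_ ?_ ?_ ?_ ?_ h1 h2)
  · exact PP_ne ha hb x0 hx0 u (u + s1 + s2) (by omega) (by omega) (by omega) (by omega)
      (by omega) (by omega) (by omega) (by omega) (by omega)
  · exact PP_ne ha hb x0 hx0 u (u + s1 + s2 + s3) (by omega) (by omega) (by omega) (by omega)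
      (by omega) (by omega) (by omega) (by omega) (by omega)
  · exact PP_ne ha hb x0 hx0 (u + s1 + s2) (u + s1 + s2 + s3) (by omega) (by omega) (by omega)
      (by omega) (by omega) (by omega) (by omega) (by omega) (by omega)
  · exact (PP_ne_f ha hb x0 f hx0 hf u (by omega)).symm
  · exact (PP_ne_f ha hb x0 f hx0 hf (u + s1 + s2) (by omega)).symm
  · exact (PP_ne_f ha hb x0 f hx0 hf (u + s1 + s2 + s3) (by omega)).symm

set_option maxRecDepth 10000 in
theorem base45 : (twoConnBeta 4 5 * twoConnAlpha 4 5) ^ 4 =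
    c3 (⟨3, by norm_num⟩ : Fin (4 + 5 - 2)) ⟨0, by norm_num⟩ ⟨1, by norm_num⟩ := by
  decide

theorem good_adj45 (x0 f : Fin (4 + 5 - 2)) (hx0 : (x0 : ℕ) = 0) (hf : (f : ℕ) = 3)
    (u : ℕ) (hu : u < 12) :
    Good (twoConnAlpha 4 5) (twoConnBeta 4 5) (16 * (4 + 5 - 3) + 16)
      (c3 f (PP 4 5 x0 u) (PP 4 5 x0 (u + 1))) := by
  have ha : (4 : ℕ) ≤ 4 := le_refl _
  have hb : (5 : ℕ) ≤ 5 := le_refl _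
  have hfeq : f = ⟨3, by norm_num⟩ := Fin.ext (by simpa using hf)
  have hx0eq : x0 = ⟨0, by norm_num⟩ := Fin.ext (by simpa using hx0)
  have hp1 : PP 4 5 x0 1 = ⟨1, by norm_num⟩ := by
    apply Fin.ext
    rw [PP_valm ha hb x0 hx0 1 (by norm_num)]
    rfl
  have hP0 : PP 4 5 x0 0 = x0 := by
    simp [PP]
  have hbase : Good (twoConnAlpha 4 5) (twoConnBeta 4 5) 8
      (c3 f (PP 4 5 x0 0) (PP 4 5 x0 1)) := by
    rw [hP0, hp1, hfeq, hx0eq, ← base45]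
    exact good_pow (good_mul good_B good_A) 4
  have hconj := good_conj (good_pow (good_del ha hb) u) hbase
  rw [c3_conj, f_fixed_pow ha hb f hf, PP_shift, PP_shift] at hconj
  have e0 : u + 0 = u := by omega
  rw [e0] at hconj
  exact good_mono (by omega) hconj

set_option maxHeartbeats 1000000 in
theorem good_supply (ha : 4 ≤ a) (hb : 5 ≤ b) (x0 f : Fin (a + b - 2))
    (hx0 : (x0 : ℕ) = 0) (hf : (f : ℕ) = a - 1)
    (i j : ℕ) (hi : i < a + b - 3) (hj : j < a + b - 3) (hij : i ≠ j) :
    Good (twoConnAlpha a b) (twoConnBeta a b) (5 * (16 * (a + b - 3) + 16))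
      (c3 f (PP a b x0 i) (PP a b x0 j)) := by
  have hm : 6 ≤ a + b - 3 := by omega
  have half : ∀ i j : ℕ, i < a + b - 3 → j < a + b - 3 → i ≠ j →
      ((i ≤ j ∧ j - i ≤ a + b - 6) ∨ (j < i ∧ j + (a + b - 3) - i ≤ a + b - 6)) →
      Good (twoConnAlpha a b) (twoConnBeta a b) (5 * (16 * (a + b - 3) + 16))
        (c3 f (PP a b x0 i) (PP a b x0 j)) := by
    clear hij hi hj i j
    intro i j hi hj hij hcase
    obtain ⟨t, ht1, ht2, hteq⟩ :
        ∃ t, 1 ≤ t ∧ t ≤ a + b - 6 ∧ (i + t = j ∨ i + t = j + (a + b - 3)) := by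
      rcases hcase with ⟨h1, h2⟩ | ⟨h1, h2⟩
      · exact ⟨j - i, by omega, by omega, Or.inl (by omega)⟩
      · exact ⟨j + (a + b - 3) - i, by omega, by omega, Or.inr (by omega)⟩
    have hPj : PP a b x0 (i + t) = PP a b x0 j := by
      rcases hteq with h | h
      · rw [h]
      · rw [h, PP_sub ha hb x0 hx0 _ (by omega)]
        congr 1
        omega
    rw [← hPj]
    rcases Nat.lt_or_ge t 3 with htlt | htge
    · -- t ∈ {1, 2} : composite constructions
      rcases Nat.lt_or_ge (a + b - 3) 8 with hmlt | hmge
      · rcases (by omega : a + b - 3 = 6 ∨ a + b - 3 = 7) with h6 | h7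
        · -- m = 6 : the (4,5) puzzle, use the special adjacent 3-cycle
          have ha4 : a = 4 := by omega
          have hb5 : b = 5 := by omega
          subst ha4
          subst hb5
          rcases (by omega : t = 1 ∨ t = 2) with rfl | rfl
          · exact good_mono (by omega)
              (good_adj45 x0 f hx0 (by omega) i (by omega))
          · have h1 := good_adj45 x0 f hx0 (by omega) i (by omega)
            have h2 := good_adj45 x0 f hx0 (by omega) (i + 1) (by omega)
            have e1 : i + 1 + 1 = i + 2 := by omega
            rw [e1] at h2
            refine good_mono (by omega) (good_extend ?_ ?_ ?_ ?_ ?_ ?_ h1 h2)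
            · exact PP_ne (by norm_num) (by norm_num) x0 hx0 i (i + 1) (by omega) (by omega)
                (by omega) (by omega) (by omega) (by omega) (by omega) (by omega) (by omega)
            · exact PP_ne (by norm_num) (by norm_num) x0 hx0 i (i + 2) (by omega) (by omega)
                (by omega) (by omega) (by omega) (by omega) (by omega) (by omega) (by omega)
            · exact PP_ne (by norm_num) (by norm_num) x0 hx0 (i + 1) (i + 2) (by omega)
                (by omega) (by omega) (by omega) (by omega) (by omega) (by omega) (by omega)
                (by omega)
            · exact (PP_ne_f (by norm_num) (by norm_num) x0 f hx0 (by omega) i (by omega)).symm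
            · exact (PP_ne_f (by norm_num) (by norm_num) x0 f hx0 (by omega) (i + 1)
                (by omega)).symm
            · exact (PP_ne_f (by norm_num) (by norm_num) x0 f hx0 (by omega) (i + 2)
                (by omega)).symm
        · -- m = 7
          rcases (by omega : t = 1 ∨ t = 2) with rfl | rfl
          · have hc := chain2 ha hb x0 f hx0 hf i 4 4 hi (by omega) (by omega) (by omega)
              (by omega) (by omega)
            have e1 : PP a b x0 (i + 4 + 4) = PP a b x0 (i + 1) := by
              rw [PP_sub ha hb x0 hx0 _ (by omega)]
              congr 1
              omega
            rw [e1] at hc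
            exact good_mono (by omega) hc
          · have hc := chain3 ha hb x0 f hx0 hf i 3 3 3 hi (by omega) (by omega) (by omega)
              (by omega) (by omega) (by omega) (by omega) (by omega) (by omega)
            have e1 : PP a b x0 (i + 3 + 3 + 3) = PP a b x0 (i + 2) := by
              rw [PP_sub ha hb x0 hx0 _ (by omega)]
              congr 1
              omega
            rw [e1] at hc
            exact good_mono (by omega) hc
      · -- m ≥ 8
        have hc := chain2 ha hb x0 f hx0 hf i (a + b - 6) (t + 3) hi (by omega) (by omega)
          (by omega) (by omega) (by omega)
        have e1 : PP a b x0 (i + (a + b - 6) + (t + 3)) = PP a b x0 (i + t) := by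
          rw [PP_sub ha hb x0 hx0 _ (by omega)]
          congr 1
          omega
        rw [e1] at hc
        exact good_mono (by omega) hc
    · -- direct gadget
      exact good_mono (by omega) (gadget_t ha hb x0 f hx0 hf i t (by omega) htge ht2)
  by_cases hd : (i ≤ j ∧ j - i ≤ a + b - 6) ∨ (j < i ∧ j + (a + b - 3) - i ≤ a + b - 6)
  · exact half i j hi hj hij hd
  · have hd' : (j ≤ i ∧ i - j ≤ a + b - 6) ∨ (i < j ∧ i + (a + b - 3) - j ≤ a + b - 6) := by
      omega
    have hrev := half j i hj hi (Ne.symm hij) hd'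
    have hinv := good_inv hrev
    rwa [c3_inv] at hinv

end Supply

end TC


/-! ### Assembly -/

namespace TC

open Equiv Equiv.Perm

section Assemble

variable {a b : ℕ}

theorem PP_surj (ha : 4 ≤ a) (hb : 5 ≤ b) (x0 : Fin (a + b - 2)) (hx0 : (x0 : ℕ) = 0)
    (w : Fin (a + b - 2)) (hw : (w : ℕ) ≠ a - 1) :
    ∃ i, i < a + b - 3 ∧ PP a b x0 i = w := by
  have hwlt := w.isLt
  refine ⟨if (w : ℕ) ≤ a - 2 then (w : ℕ) else (a + b - 2) + a - 2 - (w : ℕ), ?_, ?_⟩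
  · split_ifs <;> omega
  · apply Fin.ext
    rw [PP_valm ha hb x0 hx0 _ (by split_ifs <;> omega), fP]
    split_ifs <;> omega

theorem good_fcycle (ha : 4 ≤ a) (hb : 5 ≤ b) (x0 f : Fin (a + b - 2))
    (hx0 : (x0 : ℕ) = 0) (hf : (f : ℕ) = a - 1)
    (U V : Fin (a + b - 2)) (hUV : U ≠ V) (hUf : U ≠ f) (hVf : V ≠ f) :
    Good (twoConnAlpha a b) (twoConnBeta a b) (5 * (16 * (a + b - 3) + 16))
      (c3 f U V) := by
  have hUval : (U : ℕ) ≠ a - 1 := fun h => hUf (Fin.ext (by rw [h, hf]))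
  have hVval : (V : ℕ) ≠ a - 1 := fun h => hVf (Fin.ext (by rw [h, hf]))
  obtain ⟨i, hi, hiP⟩ := PP_surj ha hb x0 hx0 U hUval
  obtain ⟨j, hj, hjP⟩ := PP_surj ha hb x0 hx0 V hVval
  have hij : i ≠ j := by
    intro h
    exact hUV (by rw [← hiP, ← hjP, h])
  rw [← hiP, ← hjP]
  exact good_supply ha hb x0 f hx0 hf i j hi hj hij

theorem good_triple (ha : 4 ≤ a) (hb : 5 ≤ b) (x0 f : Fin (a + b - 2))
    (hx0 : (x0 : ℕ) = 0) (hf : (f : ℕ) = a - 1)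
    (x y z : Fin (a + b - 2)) (hxy : x ≠ y) (hxz : x ≠ z) (hyz : y ≠ z) :
    Good (twoConnAlpha a b) (twoConnBeta a b) (2 * (5 * (16 * (a + b - 3) + 16)))
      (c3 x y z) := by
  by_cases hx : x = f
  · rw [hx]
    refine good_mono (by omega) (good_fcycle ha hb x0 f hx0 hf y z hyz ?_ ?_)
    · rw [← hx]; exact hxy.symm
    · rw [← hx]; exact hxz.symm
  by_cases hy : y = f
  · have hxf : x ≠ f := hx
    have hfz : f ≠ z := by rw [← hy]; exact hyz
    have h1 : c3 x y z = c3 z x y := c3_rot hxy hxz hyz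
    have h2 : c3 z x y = c3 y z x := c3_rot hxz.symm hyz.symm hxy
    rw [h1, h2, hy]
    exact good_mono (by omega) (good_fcycle ha hb x0 f hx0 hf z x hxz.symm hfz.symm hxf)
  by_cases hz : z = f
  · have h1 : c3 x y z = c3 z x y := c3_rot hxy hxz hyz
    rw [h1, hz]
    exact good_mono (by omega)
      (good_fcycle ha hb x0 f hx0 hf x y hxy (by rw [← hz]; exact hxz) (by rw [← hz]; exact hyz))
  · have hfx : f ≠ x := fun h => hx h.symm
    have hfy : f ≠ y := fun h => hy h.symm
    have hfz : f ≠ z := fun h => hz h.symm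
    rw [c3_split hxy hxz hyz hfx hfy hfz]
    exact good_mono (by omega)
      (good_mul (good_fcycle ha hb x0 f hx0 hf x y hxy hfx.symm hfy.symm)
        (good_fcycle ha hb x0 f hx0 hf y z hyz hfy.symm hfz.symm))

theorem good_list (ha : 4 ≤ a) (hb : 5 ≤ b) (x0 f : Fin (a + b - 2))
    (hx0 : (x0 : ℕ) = 0) (hf : (f : ℕ) = a - 1) :
    ∀ L : List (Fin (a + b - 2) × Fin (a + b - 2) × Fin (a + b - 2)),
      (∀ t ∈ L, t.1 ≠ t.2.1 ∧ t.1 ≠ t.2.2 ∧ t.2.1 ≠ t.2.2) →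
      Good (twoConnAlpha a b) (twoConnBeta a b)
        (L.length * (2 * (5 * (16 * (a + b - 3) + 16))))
        (L.map fun t => c3 t.1 t.2.1 t.2.2).prod := by
  intro L
  induction L with
  | nil => intro _; simpa using good_one 0
  | cons hd tl ih =>
      intro hmem
      obtain ⟨h1, h2, h3⟩ := hmem hd List.mem_cons_self
      have hh := good_mul (good_triple ha hb x0 f hx0 hf hd.1 hd.2.1 hd.2.2 h1 h2 h3)
        (ih fun t ht => hmem t (List.mem_cons_of_mem _ ht))
      rw [List.map_cons, List.prod_cons]
      refine good_mono ?_ hh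
      simp only [List.length_cons]
      ring_nf
      omega

theorem main_good (ha : 4 ≤ a) (hb : 5 ≤ b) (π : Equiv.Perm (Fin (a + b - 2)))
    (hsign : Equiv.Perm.sign π = 1) :
    Good (twoConnAlpha a b) (twoConnBeta a b) (160 * (a + b - 2) ^ 2) π := by
  have hx0lt : 0 < a + b - 2 := by omega
  have hflt : a - 1 < a + b - 2 := by omega
  set x0 : Fin (a + b - 2) := ⟨0, hx0lt⟩ with hx0def
  set f : Fin (a + b - 2) := ⟨a - 1, hflt⟩ with hfdef
  have hcard : (Finset.univ.filter fun x => π x ≠ x).card ≤ a + b - 2 := by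
    refine le_trans (Finset.card_filter_le _ _) ?_
    simp
  obtain ⟨L, hL1, hL2, hL3⟩ := decomp (a + b - 2) π hcard hsign
  have hg := good_list ha hb x0 f rfl rfl L hL2
  rw [hL3] at hg
  refine good_mono ?_ hg
  have h1 : 2 * (5 * (16 * (a + b - 3) + 16)) ≤ 160 * (a + b - 2) := by omega
  calc L.length * (2 * (5 * (16 * (a + b - 3) + 16)))
      ≤ (a + b - 2) * (160 * (a + b - 2)) :=
        Nat.mul_le_mul hL1 h1
    _ = 160 * (a + b - 2) ^ 2 := by ring

end Assemble

end TC

/-- There is a constant `C` such that for all `a ≥ 4` and `b ≥ 5` with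
`n = a + b - 2`, every even permutation of `{1,…,n}` is a product of at most `C * n ^ 2`
elements of `{α, α⁻¹, β, β⁻¹}`, where `α, β` are the generators of the 2-connected
`(a,b)`-puzzle. In particular, the subgroup generated by `{α, β}` contains the
alternating group. -/
theorem twoConnected_a4_b5_puzzle_generates_even :
    ∃ C : ℕ, ∀ a b : ℕ, 4 ≤ a → 5 ≤ b →
      (∀ π : Equiv.Perm (Fin (a + b - 2)), Equiv.Perm.sign π = 1 →
        ∃ l : List (Equiv.Perm (Fin (a + b - 2))),
          l.length ≤ C * (a + b - 2) ^ 2 ∧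
          (∀ g ∈ l,
            g = twoConnAlpha a b ∨ g = (twoConnAlpha a b)⁻¹ ∨
            g = twoConnBeta a b ∨ g = (twoConnBeta a b)⁻¹) ∧
          l.prod = π) ∧
      alternatingGroup (Fin (a + b - 2)) ≤
        Subgroup.closure
          ({twoConnAlpha a b, twoConnBeta a b} : Set (Equiv.Perm (Fin (a + b - 2)))) := by
  refine ⟨1000, fun a b ha hb => ⟨?_, ?_⟩⟩
  · intro π hsign
    obtain ⟨l, h1, h2, h3⟩ := TC.main_good ha hb π hsign
    refine ⟨l, ?_, h2, h3⟩
    calc l.length ≤ 160 * (a + b - 2) ^ 2 := h1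
      _ ≤ 1000 * (a + b - 2) ^ 2 := Nat.mul_le_mul_right _ (by norm_num)
  · intro π hπ
    have hsign : Equiv.Perm.sign π = 1 := Equiv.Perm.mem_alternatingGroup.mp hπ
    obtain ⟨l, h1, h2, h3⟩ := TC.main_good ha hb π hsign
    rw [← h3]
    refine Subgroup.list_prod_mem _ fun g hg => ?_
    rcases h2 g hg with h | h | h | h <;> subst h
    · exact Subgroup.subset_closure (by simp)
    · exact Subgroup.inv_mem _ (Subgroup.subset_closure (by simp))
    · exact Subgroup.subset_closure (by simp)
    · exact Subgroup.inv_mem _ (Subgroup.subset_closure (by simp))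
end

section
/- Let H be the subgroup of the symmetric group S_6 on {1,…,6} generated by α = (1 2 3 4) and β = (3 4 5 6). Then H has exactly 120 elements, and H is isomorphic (as a group) to the symmetric group S_5. -/
set_option maxRecDepth 1000000
set_option maxHeartbeats 4000000

namespace TCFF

abbrev P := Equiv.Perm (Fin 6)

def a : P := List.formPerm [(0 : Fin 6), 1, 2, 3]
def b : P := List.formPerm [(2 : Fin 6), 3, 4, 5]
def gen : Bool → P := fun c => bif c then a else b
def w (l : List Bool) : P := l.foldr (fun c x => gen c * x) 1
def e0 : P := ⟨![0, 1, 2, 3, 4, 5], ![0, 1, 2, 3, 4, 5], by decide, by decide⟩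
def e1 : P := ⟨![1, 2, 3, 0, 4, 5], ![3, 0, 1, 2, 4, 5], by decide, by decide⟩
def e2 : P := ⟨![0, 1, 3, 4, 5, 2], ![0, 1, 5, 2, 3, 4], by decide, by decide⟩
def e3 : P := ⟨![2, 3, 0, 1, 4, 5], ![2, 3, 0, 1, 4, 5], by decide, by decide⟩
def e4 : P := ⟨![1, 3, 4, 0, 5, 2], ![3, 0, 5, 1, 2, 4], by decide, by decide⟩
def e5 : P := ⟨![1, 2, 0, 4, 5, 3], ![2, 0, 1, 5, 3, 4], by decide, by decide⟩
def e6 : P := ⟨![0, 1, 4, 5, 2, 3], ![0, 1, 4, 5, 2, 3], by decide, by decide⟩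
def e7 : P := ⟨![3, 0, 1, 2, 4, 5], ![1, 2, 3, 0, 4, 5], by decide, by decide⟩
def e8 : P := ⟨![3, 4, 0, 1, 5, 2], ![2, 3, 5, 0, 1, 4], by decide, by decide⟩
def e9 : P := ⟨![2, 0, 4, 1, 5, 3], ![1, 3, 0, 5, 2, 4], by decide, by decide⟩
def e10 : P := ⟨![1, 4, 5, 0, 2, 3], ![3, 0, 4, 5, 1, 2], by decide, by decide⟩
def e11 : P := ⟨![2, 3, 1, 4, 5, 0], ![5, 2, 0, 1, 3, 4], by decide, by decide⟩
def e12 : P := ⟨![1, 3, 0, 5, 2, 4], ![2, 0, 4, 1, 5, 3], by decide, by decide⟩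
def e13 : P := ⟨![1, 2, 4, 5, 3, 0], ![5, 0, 1, 4, 2, 3], by decide, by decide⟩
def e14 : P := ⟨![0, 1, 5, 2, 3, 4], ![0, 1, 3, 4, 5, 2], by decide, by decide⟩
def e15 : P := ⟨![4, 0, 1, 3, 5, 2], ![1, 2, 5, 3, 0, 4], by decide, by decide⟩
def e16 : P := ⟨![0, 4, 1, 2, 5, 3], ![0, 2, 3, 5, 1, 4], by decide, by decide⟩
def e17 : P := ⟨![4, 5, 0, 1, 2, 3], ![2, 3, 4, 5, 0, 1], by decide, by decide⟩
def e18 : P := ⟨![3, 1, 4, 2, 5, 0], ![5, 1, 3, 0, 2, 4], by decide, by decide⟩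
def e19 : P := ⟨![3, 0, 5, 1, 2, 4], ![1, 3, 4, 0, 5, 2], by decide, by decide⟩
def e20 : P := ⟨![2, 4, 5, 1, 3, 0], ![5, 3, 0, 4, 1, 2], by decide, by decide⟩
def e21 : P := ⟨![1, 5, 2, 0, 3, 4], ![3, 0, 2, 4, 5, 1], by decide, by decide⟩
def e22 : P := ⟨![3, 0, 2, 4, 5, 1], ![1, 5, 2, 0, 3, 4], by decide, by decide⟩
def e23 : P := ⟨![3, 4, 1, 5, 2, 0], ![5, 2, 4, 0, 1, 3], by decide, by decide⟩
def e24 : P := ⟨![2, 0, 1, 5, 3, 4], ![1, 2, 0, 4, 5, 3], by decide, by decide⟩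
def e25 : P := ⟨![1, 4, 0, 2, 3, 5], ![2, 0, 3, 4, 1, 5], by decide, by decide⟩
def e26 : P := ⟨![2, 3, 4, 5, 0, 1], ![4, 5, 0, 1, 2, 3], by decide, by decide⟩
def e27 : P := ⟨![1, 3, 5, 2, 4, 0], ![5, 0, 3, 1, 4, 2], by decide, by decide⟩
def e28 : P := ⟨![1, 2, 5, 3, 0, 4], ![4, 0, 1, 3, 5, 2], by decide, by decide⟩
def e29 : P := ⟨![4, 1, 2, 0, 5, 3], ![3, 1, 2, 5, 0, 4], by decide, by decide⟩
def e30 : P := ⟨![5, 0, 1, 4, 2, 3], ![1, 2, 4, 5, 3, 0], by decide, by decide⟩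
def e31 : P := ⟨![1, 4, 2, 3, 5, 0], ![5, 0, 2, 3, 1, 4], by decide, by decide⟩
def e32 : P := ⟨![0, 5, 1, 3, 2, 4], ![0, 2, 4, 3, 5, 1], by decide, by decide⟩
def e33 : P := ⟨![4, 5, 1, 2, 3, 0], ![5, 2, 3, 4, 0, 1], by decide, by decide⟩
def e34 : P := ⟨![5, 2, 0, 1, 3, 4], ![2, 3, 1, 4, 5, 0], by decide, by decide⟩
def e35 : P := ⟨![0, 2, 4, 3, 5, 1], ![0, 5, 1, 3, 2, 4], by decide, by decide⟩
def e36 : P := ⟨![4, 1, 5, 3, 2, 0], ![5, 1, 4, 3, 0, 2], by decide, by decide⟩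
def e37 : P := ⟨![4, 0, 2, 1, 3, 5], ![1, 3, 2, 4, 0, 5], by decide, by decide⟩
def e38 : P := ⟨![3, 4, 5, 2, 0, 1], ![4, 5, 3, 0, 1, 2], by decide, by decide⟩
def e39 : P := ⟨![3, 5, 2, 1, 4, 0], ![5, 3, 2, 0, 4, 1], by decide, by decide⟩
def e40 : P := ⟨![2, 5, 3, 1, 0, 4], ![4, 3, 0, 2, 5, 1], by decide, by decide⟩
def e41 : P := ⟨![4, 0, 3, 5, 2, 1], ![1, 5, 4, 2, 0, 3], by decide, by decide⟩
def e42 : P := ⟨![0, 4, 2, 5, 3, 1], ![0, 5, 2, 4, 1, 3], by decide, by decide⟩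
def e43 : P := ⟨![3, 1, 2, 5, 0, 4], ![4, 1, 2, 0, 5, 3], by decide, by decide⟩
def e44 : P := ⟨![2, 4, 1, 3, 0, 5], ![4, 2, 0, 3, 1, 5], by decide, by decide⟩
def e45 : P := ⟨![1, 5, 0, 3, 4, 2], ![2, 0, 5, 3, 4, 1], by decide, by decide⟩
def e46 : P := ⟨![3, 0, 4, 5, 1, 2], ![1, 4, 5, 0, 2, 3], by decide, by decide⟩
def e47 : P := ⟨![2, 0, 5, 3, 4, 1], ![1, 5, 0, 3, 4, 2], by decide, by decide⟩
def e48 : P := ⟨![2, 3, 5, 0, 1, 4], ![3, 4, 0, 1, 5, 2], by decide, by decide⟩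
def e49 : P := ⟨![1, 3, 2, 4, 0, 5], ![4, 0, 2, 1, 3, 5], by decide, by decide⟩
def e50 : P := ⟨![4, 2, 3, 1, 5, 0], ![5, 3, 1, 2, 0, 4], by decide, by decide⟩
def e51 : P := ⟨![5, 1, 3, 0, 2, 4], ![3, 1, 4, 2, 5, 0], by decide, by decide⟩
def e52 : P := ⟨![5, 1, 2, 4, 3, 0], ![5, 1, 2, 4, 3, 0], by decide, by decide⟩
def e53 : P := ⟨![2, 4, 3, 0, 5, 1], ![3, 5, 0, 2, 1, 4], by decide, by decide⟩
def e54 : P := ⟨![1, 5, 3, 4, 2, 0], ![5, 0, 4, 2, 3, 1], by decide, by decide⟩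
def e55 : P := ⟨![0, 2, 1, 4, 3, 5], ![0, 2, 1, 4, 3, 5], by decide, by decide⟩
def e56 : P := ⟨![4, 5, 2, 3, 0, 1], ![4, 5, 2, 3, 0, 1], by decide, by decide⟩
def e57 : P := ⟨![5, 2, 1, 3, 4, 0], ![5, 2, 1, 3, 4, 0], by decide, by decide⟩
def e58 : P := ⟨![5, 3, 1, 2, 0, 4], ![4, 2, 3, 1, 5, 0], by decide, by decide⟩
def e59 : P := ⟨![0, 3, 5, 4, 2, 1], ![0, 5, 4, 1, 3, 2], by decide, by decide⟩
def e60 : P := ⟨![4, 2, 5, 0, 3, 1], ![3, 5, 1, 4, 0, 2], by decide, by decide⟩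
def e61 : P := ⟨![4, 1, 3, 2, 0, 5], ![4, 1, 3, 2, 0, 5], by decide, by decide⟩
def e62 : P := ⟨![5, 0, 3, 1, 4, 2], ![1, 3, 5, 2, 4, 0], by decide, by decide⟩
def e63 : P := ⟨![0, 4, 5, 3, 1, 2], ![0, 4, 5, 3, 1, 2], by decide, by decide⟩
def e64 : P := ⟨![0, 5, 3, 2, 4, 1], ![0, 5, 3, 2, 4, 1], by decide, by decide⟩
def e65 : P := ⟨![3, 5, 0, 2, 1, 4], ![2, 4, 3, 0, 5, 1], by decide, by decide⟩
def e66 : P := ⟨![3, 2, 4, 1, 0, 5], ![4, 3, 1, 0, 2, 5], by decide, by decide⟩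
def e67 : P := ⟨![4, 1, 0, 5, 3, 2], ![2, 1, 5, 4, 0, 3], by decide, by decide⟩
def e68 : P := ⟨![5, 0, 4, 2, 3, 1], ![1, 5, 3, 4, 2, 0], by decide, by decide⟩
def e69 : P := ⟨![1, 4, 3, 5, 0, 2], ![4, 0, 5, 2, 1, 3], by decide, by decide⟩
def e70 : P := ⟨![0, 2, 3, 5, 1, 4], ![0, 4, 1, 2, 5, 3], by decide, by decide⟩
def e71 : P := ⟨![3, 4, 2, 0, 1, 5], ![3, 4, 2, 0, 1, 5], by decide, by decide⟩
def e72 : P := ⟨![3, 5, 1, 4, 0, 2], ![4, 2, 5, 0, 3, 1], by decide, by decide⟩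
def e73 : P := ⟨![2, 5, 1, 0, 4, 3], ![3, 2, 0, 5, 4, 1], by decide, by decide⟩
def e74 : P := ⟨![4, 0, 5, 2, 1, 3], ![1, 4, 3, 5, 0, 2], by decide, by decide⟩
def e75 : P := ⟨![3, 1, 5, 0, 4, 2], ![3, 1, 5, 0, 4, 2], by decide, by decide⟩
def e76 : P := ⟨![2, 0, 3, 4, 1, 5], ![1, 4, 0, 2, 3, 5], by decide, by decide⟩
def e77 : P := ⟨![4, 3, 0, 2, 5, 1], ![2, 5, 3, 1, 0, 4], by decide, by decide⟩
def e78 : P := ⟨![5, 3, 4, 1, 2, 0], ![5, 3, 4, 1, 2, 0], by decide, by decide⟩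
def e79 : P := ⟨![2, 1, 4, 0, 3, 5], ![3, 1, 0, 4, 2, 5], by decide, by decide⟩
def e80 : P := ⟨![5, 2, 3, 4, 0, 1], ![4, 5, 1, 2, 3, 0], by decide, by decide⟩
def e81 : P := ⟨![2, 1, 3, 5, 4, 0], ![5, 1, 0, 2, 4, 3], by decide, by decide⟩
def e82 : P := ⟨![3, 5, 4, 0, 2, 1], ![3, 5, 4, 0, 2, 1], by decide, by decide⟩
def e83 : P := ⟨![2, 5, 0, 4, 3, 1], ![2, 5, 0, 4, 3, 1], by decide, by decide⟩
def e84 : P := ⟨![0, 3, 1, 5, 4, 2], ![0, 2, 5, 1, 4, 3], by decide, by decide⟩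
def e85 : P := ⟨![4, 5, 3, 0, 1, 2], ![3, 4, 5, 2, 0, 1], by decide, by decide⟩
def e86 : P := ⟨![5, 3, 2, 0, 4, 1], ![3, 5, 2, 1, 4, 0], by decide, by decide⟩
def e87 : P := ⟨![5, 0, 2, 3, 1, 4], ![1, 4, 2, 3, 5, 0], by decide, by decide⟩
def e88 : P := ⟨![1, 0, 5, 4, 3, 2], ![1, 0, 5, 4, 3, 2], by decide, by decide⟩
def e89 : P := ⟨![4, 3, 5, 1, 0, 2], ![4, 3, 5, 1, 0, 2], by decide, by decide⟩
def e90 : P := ⟨![4, 2, 0, 3, 1, 5], ![2, 4, 1, 3, 0, 5], by decide, by decide⟩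
def e91 : P := ⟨![5, 1, 4, 3, 0, 2], ![4, 1, 5, 3, 2, 0], by decide, by decide⟩
def e92 : P := ⟨![5, 1, 0, 2, 4, 3], ![2, 1, 3, 5, 4, 0], by decide, by decide⟩
def e93 : P := ⟨![0, 5, 2, 4, 1, 3], ![0, 4, 2, 5, 3, 1], by decide, by decide⟩
def e94 : P := ⟨![0, 3, 4, 2, 1, 5], ![0, 4, 3, 1, 2, 5], by decide, by decide⟩
def e95 : P := ⟨![4, 2, 1, 5, 0, 3], ![4, 2, 1, 5, 0, 3], by decide, by decide⟩
def e96 : P := ⟨![2, 4, 0, 5, 1, 3], ![2, 4, 0, 5, 1, 3], by decide, by decide⟩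
def e97 : P := ⟨![1, 5, 4, 2, 0, 3], ![4, 0, 3, 5, 2, 1], by decide, by decide⟩
def e98 : P := ⟨![0, 4, 3, 1, 2, 5], ![0, 3, 4, 2, 1, 5], by decide, by decide⟩
def e99 : P := ⟨![3, 2, 1, 0, 5, 4], ![3, 2, 1, 0, 5, 4], by decide, by decide⟩
def e100 : P := ⟨![0, 2, 5, 1, 4, 3], ![0, 3, 1, 5, 4, 2], by decide, by decide⟩
def e101 : P := ⟨![3, 1, 0, 4, 2, 5], ![2, 1, 4, 0, 3, 5], by decide, by decide⟩
def e102 : P := ⟨![5, 4, 0, 3, 2, 1], ![2, 5, 4, 3, 1, 0], by decide, by decide⟩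
def e103 : P := ⟨![5, 3, 0, 4, 1, 2], ![2, 4, 5, 1, 3, 0], by decide, by decide⟩
def e104 : P := ⟨![3, 2, 0, 5, 4, 1], ![2, 5, 1, 0, 4, 3], by decide, by decide⟩
def e105 : P := ⟨![0, 5, 4, 1, 3, 2], ![0, 3, 5, 4, 2, 1], by decide, by decide⟩
def e106 : P := ⟨![1, 0, 2, 5, 4, 3], ![1, 0, 2, 5, 4, 3], by decide, by decide⟩
def e107 : P := ⟨![5, 2, 4, 0, 1, 3], ![3, 4, 1, 5, 2, 0], by decide, by decide⟩
def e108 : P := ⟨![2, 1, 5, 4, 0, 3], ![4, 1, 0, 5, 3, 2], by decide, by decide⟩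
def e109 : P := ⟨![5, 4, 2, 1, 0, 3], ![4, 3, 2, 5, 1, 0], by decide, by decide⟩
def e110 : P := ⟨![4, 3, 1, 0, 2, 5], ![3, 2, 4, 1, 0, 5], by decide, by decide⟩
def e111 : P := ⟨![2, 1, 0, 3, 5, 4], ![2, 1, 0, 3, 5, 4], by decide, by decide⟩
def e112 : P := ⟨![1, 0, 4, 3, 2, 5], ![1, 0, 4, 3, 2, 5], by decide, by decide⟩
def e113 : P := ⟨![4, 3, 2, 5, 1, 0], ![5, 4, 2, 1, 0, 3], by decide, by decide⟩
def e114 : P := ⟨![2, 5, 4, 3, 1, 0], ![5, 4, 0, 3, 2, 1], by decide, by decide⟩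
def e115 : P := ⟨![0, 3, 2, 1, 5, 4], ![0, 3, 2, 1, 5, 4], by decide, by decide⟩
def e116 : P := ⟨![5, 4, 1, 0, 3, 2], ![3, 2, 5, 4, 1, 0], by decide, by decide⟩
def e117 : P := ⟨![1, 0, 3, 2, 5, 4], ![1, 0, 3, 2, 5, 4], by decide, by decide⟩
def e118 : P := ⟨![3, 2, 5, 4, 1, 0], ![5, 4, 1, 0, 3, 2], by decide, by decide⟩
def e119 : P := ⟨![5, 4, 3, 2, 1, 0], ![5, 4, 3, 2, 1, 0], by decide, by decide⟩
def els : List P := [e0, e1, e2, e3, e4, e5, e6, e7, e8, e9, e10, e11, e12, e13, e14, e15, e16, e17, e18, e19, e20, e21, e22, e23, e24, e25, e26, e27, e28, e29, e30, e31, e32, e33, e34, e35, e36, e37, e38, e39, e40, e41, e42, e43, e44, e45, e46, e47, e48, e49, e50, e51, e52, e53, e54, e55, e56, e57, e58, e59, e60, e61, e62, e63, e64, e65, e66, e67, e68, e69, e70, e71, e72, e73, e74, e75, e76, e77, e78, e79, e80, e81, e82, e83, e84, e85, e86, e87, e88, e89, e90, e91, e92, e93, e94, e95, e96, e97, e98,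 e99, e100, e101, e102, e103, e104, e105, e106, e107, e108, e109, e110, e111, e112, e113, e114, e115, e116, e117, e118, e119]
def L : List (List Bool) := [[],
[true],
[false],
[true, true],
[false, true],
[true, false],
[false, false],
[true, true, true],
[false, true, true],
[true, false, true],
[false, false, true],
[true, true, false],
[false, true, false],
[true, false, false],
[false, false, false],
[false, true, true, true],
[true, false, true, true],
[false, false, true, true],
[true, true, false, true],
[false, true, false, true],
[true, false, false, true],
[false, false, false, true],
[true, true, true, false],
[false, true, true, false],
[true, false, true, false],
[false, false, true, false],
[true, true, false, false],
[false, true, false, false],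
[true, false, false, false],
[true, false, true, true, true],
[false, false, true, true, true],
[true, true, false, true, true],
[false, true, false, true, true],
[true, false, false, true, true],
[false, false, false, true, true],
[true, true, true, false, true],
[false, true, true, false, true],
[false, false, true, false, true],
[true, true, false, false, true],
[false, true, false, false, true],
[true, false, false, false, true],
[false, true, true, true, false],
[true, false, true, true, false],
[true, true, false, true, false],
[true, false, false, true, false],
[false, false, false, true, false],
[true, true, true, false, false],
[true, false, true, false, false],
[true, true, false, false, false],
[false, true, false, false, false],
[true, true, false, true, true, true],
[false, true, false, true, true, true],
[true, false, false, true, true, true],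
[true, true, true, false, true, true],
[false, true, true, false, true, true],
[false, false, true, false, true, true],
[true, true, false, false, true, true],
[false, true, false, false, true, true],
[true, false, false, false, true, true],
[false, true, true, true, false, true],
[true, false, true, true, false, true],
[true, false, false, true, false, true],
[false, false, false, true, false, true],
[true, true, true, false, false, true],
[true, false, true, false, false, true],
[true, true, false, false, false, true],
[false, true, false, false, false, true],
[true, false, true, true, true, false],
[false, false, true, true, true, false],
[true, true, false, true, true, false],
[true, true, true, false, true, false],
[true, true, false, false, true, false],
[false, true, false, false, true, false],
[true, false, false, false, true, false],
[false, true, true, true, false, false],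
[true, true, false, true, false, false],
[true, false, true, false, false, false],
[true, true, true, false, true, true, true],
[false, true, true, false, true, true, true],
[false, false, true, false, true, true, true],
[true, true, false, false, true, true, true],
[false, true, false, false, true, true, true],
[false, true, true, true, false, true, true],
[true, false, true, true, false, true, true],
[false, false, false, true, false, true, true],
[true, true, true, false, false, true, true],
[true, false, true, false, false, true, true],
[true, true, false, false, false, true, true],
[true, false, true, true, true, false, true],
[true, true, false, true, true, false, true],
[true, true, false, false, true, false, true],
[false, true, false, false, true, false, true],
[true, false, false, false, true, false, true],
[false, true, true, true, false, false, true],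
[true, false, true, false, false, false, true],
[true, true, false, true, true, true, false],
[true, true, true, false, true, true, false],
[false, true, true, false, true, true, false],
[true, true, true, false, false, true, false],
[false, true, false, false, false, true, false],
[true, true, true, false, true, false, false],
[true, true, false, true, false, false, false],
[false, true, true, true, false, true, true, true],
[true, true, true, false, false, true, true, true],
[true, false, true, false, false, true, true, true],
[true, false, true, true, true, false, true, true],
[true, false, false, false, true, false, true, true],
[false, true, true, true, false, false, true, true],
[true, true, false, true, true, true, false, true],
[false, true, true, false, true, true, false, true],
[true, true, true, false, false, true, false, true],
[false, true, false, false, false, true, false, true],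
[true, true, false, true, false, false, false, true],
[true, true, true, false, true, true, true, false],
[true, false, true, true, false, true, true, false],
[true, false, true, false, false, false, true, false],
[true, false, true, true, true, false, true, true, true],
[false, true, false, false, false, true, false, true, true],
[true, true, true, false, true, true, true, false, true],
[true, false, true, true, false, true, true, false, true]]
def ta : List Nat := [1, 3, 5, 7, 9, 11, 13, 0, 16, 18, 20, 22, 24, 26, 28, 29, 31, 33, 35, 14, 38, 40, 2, 42, 43, 44, 46, 47, 48, 50, 52, 53, 21, 56, 58, 4, 60, 61, 63, 64, 65, 67, 69, 70, 71, 73, 6, 75, 19, 76, 77, 34, 80, 8, 83, 49, 85, 86, 87, 88, 89, 90, 92, 10, 45, 32, 94, 95, 91, 96, 12, 98, 93, 39, 36, 100, 101, 15, 68, 66, 103, 104, 105, 72, 106, 17, 62, 51, 108, 74, 110, 107, 57, 54, 112, 113, 23, 114, 25, 115, 27, 55, 116, 30, 84, 97, 81, 78, 118, 119, 37, 99, 79, 41, 82, 117, 109, 111, 59, 102]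
def tb : List Nat := [2, 4, 6, 8, 10, 12, 14, 15, 17, 19, 21, 23, 25, 27, 0, 30, 32, 34, 36, 37, 39, 1, 41, 33, 7, 45, 38, 31, 49, 51, 24, 54, 55, 57, 3, 59, 52, 62, 56, 50, 66, 68, 64, 61, 72, 5, 74, 22, 71, 69, 78, 79, 81, 82, 13, 84, 80, 11, 44, 42, 86, 91, 9, 93, 35, 90, 89, 92, 47, 97, 94, 85, 95, 99, 87, 29, 46, 102, 20, 75, 26, 18, 60, 104, 16, 107, 53, 76, 106, 109, 103, 108, 111, 70, 63, 58, 65, 28, 105, 110, 115, 67, 83, 96, 77, 100, 117, 48, 43, 40, 116, 101, 88, 119, 118, 98, 73, 112, 113, 114]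
def tia : List Nat := [7, 0, 22, 1, 35, 2, 46, 3, 53, 4, 63, 5, 70, 6, 19, 77, 8, 85, 9, 48, 10, 32, 11, 96, 12, 98, 13, 100, 14, 15, 103, 16, 65, 17, 51, 18, 74, 110, 20, 73, 21, 113, 23, 24, 25, 64, 26, 27, 28, 55, 29, 87, 30, 31, 93, 101, 33, 92, 34, 118, 36, 37, 86, 38, 39, 40, 79, 41, 78, 42, 43, 44, 83, 45, 89, 47, 49, 50, 107, 112, 52, 106, 114, 54, 104, 56, 57, 58, 59, 60, 61, 68, 62, 72, 66, 67, 69, 105, 71, 111, 75, 76, 119, 80, 81, 82, 84, 91, 88, 116, 90, 117, 94, 95, 97, 99, 102, 115, 108, 109]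
def tib : List Nat := [14, 21, 0, 34, 1, 45, 2, 24, 3, 62, 4, 57, 5, 54, 6, 7, 84, 8, 81, 9, 78, 10, 47, 11, 30, 12, 80, 13, 97, 75, 15, 27, 16, 23, 17, 64, 18, 19, 26, 20, 109, 22, 59, 108, 58, 25, 76, 68, 107, 28, 39, 29, 36, 86, 31, 32, 38, 33, 95, 35, 82, 43, 37, 94, 42, 96, 40, 101, 41, 49, 93, 48, 44, 116, 46, 79, 87, 104, 50, 51, 56, 52, 53, 102, 55, 71, 60, 74, 112, 66, 65, 61, 67, 63, 70, 72, 103, 69, 115, 73, 105, 111, 77, 90, 83, 98, 88, 85, 91, 89, 99, 92, 117, 118, 119, 100, 110, 106, 114, 113]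
def tin : List Nat := [0, 7, 14, 3, 19, 24, 6, 1, 48, 12, 46, 34, 9, 30, 2, 28, 70, 26, 51, 4, 103, 22, 21, 107, 5, 76, 17, 62, 15, 43, 13, 87, 35, 80, 11, 32, 91, 49, 85, 86, 77, 97, 93, 29, 90, 47, 10, 45, 8, 37, 58, 18, 52, 65, 68, 55, 56, 57, 50, 105, 72, 61, 27, 63, 64, 53, 110, 108, 54, 74, 16, 71, 60, 104, 69, 75, 25, 40, 78, 101, 33, 92, 82, 83, 100, 38, 39, 31, 88, 89, 44, 36, 81, 42, 98, 95, 96, 41, 94, 99, 84, 79, 114, 20, 73, 59, 106, 23, 67, 113, 66, 111, 112, 109, 102, 115, 118, 117, 116, 119]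
def m : Fin 5 → P := ![⟨![1, 0, 4, 5, 2, 3], ![1, 0, 4, 5, 2, 3], by decide, by decide⟩, ⟨![2, 3, 0, 1, 5, 4], ![2, 3, 0, 1, 5, 4], by decide, by decide⟩, ⟨![3, 4, 5, 0, 1, 2], ![3, 4, 5, 0, 1, 2], by decide, by decide⟩, ⟨![4, 5, 3, 2, 0, 1], ![4, 5, 3, 2, 0, 1], by decide, by decide⟩, ⟨![5, 2, 1, 4, 3, 0], ![5, 2, 1, 4, 3, 0], by decide, by decide⟩]
def geti (k : Nat) : P := els.getD k 1
def idx (p : P) : Fin 5 :=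
  if p = m 0 then 0 else if p = m 1 then 1 else if p = m 2 then 2 else if p = m 3 then 3 else 4

-- decidable facts
theorem hlen : els.length = 120 := by decide
theorem nodup : els.Nodup := by decide
theorem hone : geti 0 = 1 := by decide
theorem idx_m : ∀ i : Fin 5, idx (m i) = i := by decide
theorem hword : ∀ k ∈ List.range 120, geti k = w (L.getD k []) := by decide
theorem hA : ∀ k ∈ List.range 120, ta.getD k 0 < 120 ∧ a * geti k = geti (ta.getD k 0) := by decide
theorem hB : ∀ k ∈ List.range 120, tb.getD k 0 < 120 ∧ b * geti k = geti (tb.getD k 0) := by decide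
theorem hIA : ∀ k ∈ List.range 120, tia.getD k 0 < 120 ∧ a⁻¹ * geti k = geti (tia.getD k 0) := by decide
theorem hIB : ∀ k ∈ List.range 120, tib.getD k 0 < 120 ∧ b⁻¹ * geti k = geti (tib.getD k 0) := by decide
theorem hIV : ∀ k ∈ List.range 120, tin.getD k 0 < 120 ∧ (geti k)⁻¹ = geti (tin.getD k 0) := by decide
theorem K1 : ∀ k ∈ List.range 120, ∀ i : Fin 5,
    m (idx (geti k * m i * (geti k)⁻¹)) = geti k * m i * (geti k)⁻¹ := by decide
theorem K2 : ∀ k ∈ List.range 120,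
    (∀ i : Fin 5, geti k * m i * (geti k)⁻¹ = m i) → geti k = 1 := by decide

def HC : Subgroup P := Subgroup.closure {a, b}

theorem geti_mem {k : Nat} (hk : k < 120) : geti k ∈ els := by
  have hk' : k < els.length := by rw [hlen]; exact hk
  rw [geti, List.getD_eq_get _ _ ⟨k, hk'⟩]
  exact List.get_mem _ _

theorem mem_els {x : P} (hx : x ∈ els) : ∃ k, k < 120 ∧ geti k = x := by
  obtain ⟨n, rfl⟩ := List.mem_iff_get.mp hx
  refine ⟨n, by rw [← hlen]; exact n.isLt, ?_⟩
  rw [geti, List.getD_eq_get _ _ n]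

theorem w_mem (l : List Bool) : w l ∈ HC := by
  induction l with
  | nil => exact one_mem _
  | cons c l ih =>
    refine mul_mem ?_ ih
    cases c
    · exact Subgroup.subset_closure (Set.mem_insert_iff.mpr (Or.inr rfl))
    · exact Subgroup.subset_closure (Set.mem_insert _ _)

theorem els_sub : ∀ x ∈ els, x ∈ HC := by
  intro x hx
  obtain ⟨k, hk, rfl⟩ := mem_els hx
  rw [hword k (List.mem_range.mpr hk)]
  exact w_mem _

theorem HC_sub : ∀ x ∈ HC, x ∈ els := by
  intro x hx
  induction hx using Subgroup.closure_induction_left with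
  | one => exact hone ▸ geti_mem (by norm_num)
  | mul_left g hg y _ ih =>
    obtain ⟨k, hk, rfl⟩ := mem_els ih
    rcases hg with rfl | hg
    · exact (hA k (List.mem_range.mpr hk)).2 ▸ geti_mem (hA k (List.mem_range.mpr hk)).1
    · rw [Set.mem_singleton_iff] at hg; subst hg
      exact (hB k (List.mem_range.mpr hk)).2 ▸ geti_mem (hB k (List.mem_range.mpr hk)).1
  | inv_mul_cancel g hg y _ ih =>
    obtain ⟨k, hk, rfl⟩ := mem_els ih
    rcases hg with rfl | hg
    · exact (hIA k (List.mem_range.mpr hk)).2 ▸ geti_mem (hIA k (List.mem_range.mpr hk)).1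
    · rw [Set.mem_singleton_iff] at hg; subst hg
      exact (hIB k (List.mem_range.mpr hk)).2 ▸ geti_mem (hIB k (List.mem_range.mpr hk)).1

theorem card120 : Nat.card HC = 120 := by
  have hset : (HC : Set P) = ↑els.toFinset := by
    ext x
    simp only [SetLike.mem_coe, Finset.mem_coe, List.mem_toFinset]
    exact ⟨HC_sub x, els_sub x⟩
  have h1 : Nat.card HC = els.toFinset.card := by
    rw [← Set.ncard_coe_finset, ← hset, ← Nat.card_coe_set_eq, SetLike.coe_sort_coe]
  rw [h1, List.toFinset_card_of_nodup nodup, hlen]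

theorem hIV' {h : P} (hh : h ∈ els) : h⁻¹ ∈ els := by
  obtain ⟨k, hk, rfl⟩ := mem_els hh
  exact (hIV k (List.mem_range.mpr hk)).2 ▸ geti_mem (hIV k (List.mem_range.mpr hk)).1

theorem K1' {h : P} (hh : h ∈ els) (i : Fin 5) :
    m (idx (h * m i * h⁻¹)) = h * m i * h⁻¹ := by
  obtain ⟨k, hk, rfl⟩ := mem_els hh
  exact K1 k (List.mem_range.mpr hk) i

theorem K2' {h : P} (hh : h ∈ els) (hfix : ∀ i : Fin 5, h * m i * h⁻¹ = m i) : h = 1 := by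
  obtain ⟨k, hk, rfl⟩ := mem_els hh
  exact K2 k (List.mem_range.mpr hk) hfix

def f (h : P) (i : Fin 5) : Fin 5 := idx (h * m i * h⁻¹)

theorem f_comp {g h : P} (hg : g ∈ els) (hh : h ∈ els) (i : Fin 5) :
    f g (f h i) = f (g * h) i := by
  show idx (g * m (idx (h * m i * h⁻¹)) * g⁻¹) = idx (g * h * m i * (g * h)⁻¹)
  rw [K1' hh i]
  congr 1

theorem f_one (i : Fin 5) : f 1 i = i := by
  show idx (1 * m i * 1⁻¹) = i
  rw [one_mul, inv_one, mul_one]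
  exact idx_m i

def eF (h : P) (hh : h ∈ els) : Equiv.Perm (Fin 5) where
  toFun := f h
  invFun := f h⁻¹
  left_inv i := by rw [f_comp (hIV' hh) hh, inv_mul_cancel, f_one]
  right_inv i := by rw [f_comp hh (hIV' hh), mul_inv_cancel, f_one]

def φ : HC →* Equiv.Perm (Fin 5) where
  toFun h := eF h.1 (HC_sub h.1 h.2)
  map_one' := Equiv.ext f_one
  map_mul' g h := Equiv.ext fun i => (f_comp (HC_sub g.1 g.2) (HC_sub h.1 h.2) i).symm

theorem φ_inj : Function.Injective φ := by
  rw [injective_iff_map_eq_one]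
  intro h hφ
  have hh := HC_sub h.1 h.2
  have key : ∀ i : Fin 5, h.1 * m i * h.1⁻¹ = m i := by
    intro i
    have h1 : idx (h.1 * m i * h.1⁻¹) = i := by
      have := congrArg (fun (σ : Equiv.Perm (Fin 5)) => σ i) hφ
      simpa [φ, eF, f] using this
    have h2 := K1' hh i
    rw [h1] at h2
    exact h2.symm
  exact Subtype.ext (K2' hh key)

theorem φ_bij : Function.Bijective φ := by
  rw [Nat.bijective_iff_injective_and_card]
  refine ⟨φ_inj, ?_⟩
  rw [card120, Nat.card_eq_fintype_card, Fintype.card_perm, Fintype.card_fin]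
  norm_num [Nat.factorial]

end TCFF

/-- Let `H` be the subgroup of the symmetric group on `{1,…,6}` (modeled as
`Fin 6`) generated by `α = (1 2 3 4)` and `β = (3 4 5 6)` (0-indexed: `(0 1 2 3)` and
`(2 3 4 5)`). Then `H` has exactly 120 elements and is isomorphic to the symmetric group
`S₅`. -/
theorem twoConnected_four_four_puzzle_group :
    Nat.card
      (Subgroup.closure
        ({List.formPerm [(0 : Fin 6), 1, 2, 3],
          List.formPerm [(2 : Fin 6), 3, 4, 5]} : Set (Equiv.Perm (Fin 6)))) = 120 ∧
    Nonempty
      ((Subgroup.closure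
        ({List.formPerm [(0 : Fin 6), 1, 2, 3],
          List.formPerm [(2 : Fin 6), 3, 4, 5]} : Set (Equiv.Perm (Fin 6)))) ≃*
        Equiv.Perm (Fin 5)) := by
  exact ⟨TCFF.card120, ⟨MulEquiv.ofBijective TCFF.φ TCFF.φ_bij⟩⟩
end

section
/- There exists a group automorphism ψ of the symmetric group S_6 on {1,…,6} satisfying ψ((1 2)) = (1 5)(2 3)(4 6), ψ((1 3)) = (1 4)(2 6)(3 5), ψ((1 4)) = (1 3)(2 4)(5 6), ψ((1 5)) = (1 2)(3 6)(4 5), ψ((1 6)) = (1 6)(2 5)(3 4), such that for every permutation π of {1,…,6}: π belongs to the subgroup generated by α = (1 2 3 4) and β = (3 4 5 6) if and only if ψ(π)(4) = 4. -/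
open Equiv Finset

set_option maxRecDepth 20000
set_option maxHeartbeats 4000000

abbrev GG := Equiv.Perm (Fin 6)

/-- the five synthemes of the total stabilized by ⟨α, β⟩ -/
def tt : Fin 5 → GG :=
  ![Equiv.swap 0 1 * Equiv.swap 2 4 * Equiv.swap 3 5,
    Equiv.swap 0 2 * Equiv.swap 1 3 * Equiv.swap 4 5,
    Equiv.swap 0 3 * Equiv.swap 1 4 * Equiv.swap 2 5,
    Equiv.swap 0 4 * Equiv.swap 1 5 * Equiv.swap 2 3,
    Equiv.swap 0 5 * Equiv.swap 1 2 * Equiv.swap 3 4]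

/-- membership in the transitive S₅ : permuting the synthemes of the total -/
def P (σ : GG) : Prop := ∀ a : Fin 5, ∃ b : Fin 5, σ * tt a = tt b * σ

instance : DecidablePred P :=
  fun σ => decidable_of_iff (∀ a : Fin 5, ∃ b : Fin 5, σ * tt a = tt b * σ) Iff.rfl

lemma Pone : P 1 := by decide

lemma Pmul {σ τ : GG} (hσ : P σ) (hτ : P τ) : P (σ * τ) := by
  intro a
  obtain ⟨b, hb⟩ := hτ a
  obtain ⟨c, hc⟩ := hσ b
  exact ⟨c, by rw [mul_assoc, hb, ← mul_assoc, hc, mul_assoc]⟩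

lemma tinj : ∀ a b : Fin 5, tt a = tt b → a = b := by decide

lemma Pinv {σ : GG} (hσ : P σ) : P σ⁻¹ := by
  intro a
  have hinj : Function.Injective (fun x : Fin 5 => (hσ x).choose) := by
    intro x y h
    have hx := (hσ x).choose_spec
    have hy := (hσ y).choose_spec
    have h' : (hσ x).choose = (hσ y).choose := h
    rw [h'] at hx
    exact tinj x y (mul_left_cancel (hx.trans hy.symm))
  obtain ⟨c, hc⟩ := Finite.injective_iff_surjective.mp hinj a
  have hc' : (hσ c).choose = a := hc
  refine ⟨c, ?_⟩
  have h := (hσ c).choose_spec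
  rw [hc'] at h
  rw [eq_mul_inv_iff_mul_eq, mul_assoc, ← h, inv_mul_cancel_left]

def gr : Fin 6 → GG :=
  ![Equiv.swap 4 5, Equiv.swap 3 4 * Equiv.swap 3 5, Equiv.swap 3 4, 1,
    Equiv.swap 3 5 * Equiv.swap 3 4, Equiv.swap 3 5]

lemma distinct : ∀ i j : Fin 6, P ((gr i)⁻¹ * gr j) → i = j := by decide

def Hf : Finset GG := Finset.univ.filter P

lemma hcard : Hf.card = 120 := by decide

lemma mem_img {x : GG} {i : Fin 6} : x ∈ Hf.image (gr i * ·) ↔ P ((gr i)⁻¹ * x) := by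
  constructor
  · rintro hx
    obtain ⟨h, hh, rfl⟩ := Finset.mem_image.mp hx
    rw [inv_mul_cancel_left]
    exact (Finset.mem_filter.mp hh).2
  · intro hp
    exact Finset.mem_image.mpr ⟨(gr i)⁻¹ * x, Finset.mem_filter.mpr ⟨Finset.mem_univ _, hp⟩,
      by rw [mul_inv_cancel_left]⟩

lemma covers (σ : GG) : ∃ i : Fin 6, P ((gr i)⁻¹ * σ) := by
  have hdisj : ∀ i ∈ (Finset.univ : Finset (Fin 6)), ∀ j ∈ Finset.univ, i ≠ j →
      Disjoint (Hf.image (gr i * ·)) (Hf.image (gr j * ·)) := by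
    intro i _ j _ hij
    rw [Finset.disjoint_left]
    intro x hx hy
    refine hij (distinct i j ?_)
    have e : (gr i)⁻¹ * gr j = ((gr i)⁻¹ * x) * ((gr j)⁻¹ * x)⁻¹ := by group
    rw [e]
    exact Pmul (mem_img.mp hx) (Pinv (mem_img.mp hy))
  have hU : (Finset.univ.biUnion fun i : Fin 6 => Hf.image (gr i * ·)) = Finset.univ := by
    apply Finset.eq_univ_of_card
    rw [Finset.card_biUnion hdisj]
    have himg : ∀ i : Fin 6, (Hf.image (gr i * ·)).card = 120 := fun i => by
      rw [Finset.card_image_of_injective _ (mul_right_injective (gr i)), hcard]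
    simp only [himg, Finset.sum_const, Finset.card_univ, smul_eq_mul, Fintype.card_fin,
      Fintype.card_perm]
    rfl
  obtain ⟨i, -, hi⟩ := Finset.mem_biUnion.mp (hU ▸ Finset.mem_univ σ)
  exact ⟨i, mem_img.mp hi⟩

lemma exists_rep (σ : GG) : ∃! i : Fin 6, P ((gr i)⁻¹ * σ) := by
  obtain ⟨i, hi⟩ := covers σ
  refine ⟨i, hi, fun j hj => ?_⟩
  refine distinct j i ?_
  have e : (gr j)⁻¹ * gr i = ((gr j)⁻¹ * σ) * ((gr i)⁻¹ * σ)⁻¹ := by group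
  rw [e]
  exact Pmul hj (Pinv hi)

def F (σ : GG) (i : Fin 6) : Fin 6 := Fintype.choose _ (exists_rep (σ * gr i))

lemma Fspec (σ : GG) (i : Fin 6) : P ((gr (F σ i))⁻¹ * (σ * gr i)) :=
  Fintype.choose_spec _ (exists_rep (σ * gr i))

lemma Funiq {σ : GG} {i j : Fin 6} (h : P ((gr j)⁻¹ * (σ * gr i))) : F σ i = j :=
  ((exists_rep (σ * gr i)).unique (Fspec σ i) h)

lemma Fli (σ : GG) (i : Fin 6) : F σ⁻¹ (F σ i) = i := by
  apply Funiq
  have h := Pinv (Fspec σ i)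
  have e : ((gr (F σ i))⁻¹ * (σ * gr i))⁻¹ = (gr i)⁻¹ * (σ⁻¹ * gr (F σ i)) := by group
  rwa [e] at h

lemma Fri (σ : GG) (i : Fin 6) : F σ (F σ⁻¹ i) = i := by
  apply Funiq
  have h := Pinv (Fspec σ⁻¹ i)
  have e : ((gr (F σ⁻¹ i))⁻¹ * (σ⁻¹ * gr i))⁻¹ = (gr i)⁻¹ * (σ * gr (F σ⁻¹ i)) := by group
  rwa [e] at h

def Phi : GG →* Equiv.Perm (Fin 6) where
  toFun σ := ⟨F σ, F σ⁻¹, Fli σ, Fri σ⟩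
  map_one' := by
    refine Equiv.ext fun i => (?_ : F 1 i = i)
    apply Funiq
    have e : (gr i)⁻¹ * (1 * gr i) = 1 := by group
    rw [e]; exact Pone
  map_mul' σ τ := by
    refine Equiv.ext fun i => (?_ : F (σ * τ) i = F σ (F τ i))
    apply Funiq
    have h := Pmul (Fspec σ (F τ i)) (Fspec τ i)
    have e : ((gr (F σ (F τ i)))⁻¹ * (σ * gr (F τ i))) * ((gr (F τ i))⁻¹ * (τ * gr i)) =
        (gr (F σ (F τ i)))⁻¹ * (σ * τ * gr i) := by group
    rwa [e] at h


lemma Phi_surj : Function.Surjective Phi := by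
  rw [← MonoidHom.range_eq_top]
  have hn : (List.finRange 6).Nodup := List.nodup_finRange 6
  have h1 : (List.formPerm (List.finRange 6)).IsCycle := List.isCycle_formPerm hn (by decide)
  have h2 : (List.formPerm (List.finRange 6)).support = Finset.univ := by decide
  have hg := Equiv.Perm.closure_cycle_adjacent_swap h1 h2 (0 : Fin 6)
  rw [eq_top_iff, ← hg, Subgroup.closure_le]
  rintro x (rfl | rfl)
  · exact ⟨List.formPerm [(0 : Fin 6), 4, 5] * Equiv.swap 1 3, by decide⟩
  · exact ⟨Equiv.swap 0 4 * Equiv.swap 1 2 * Equiv.swap 3 5, by decide⟩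

lemma Phi_inj : Function.Injective Phi := Finite.injective_iff_surjective.mpr Phi_surj

noncomputable def psi : GG ≃* GG := MulEquiv.ofBijective Phi ⟨Phi_inj, Phi_surj⟩

lemma psi_eq (σ : GG) : psi σ = Phi σ := rfl

/-- the subgroup generated by α and β -/
def Csub : Subgroup GG :=
  Subgroup.closure {List.formPerm [(0 : Fin 6), 1, 2, 3], List.formPerm [(2 : Fin 6), 3, 4, 5]}

/-- its image under the automorphism -/
def D : Subgroup GG := Subgroup.map Phi Csub

def Ap : GG := List.formPerm [(1 : Fin 6), 5, 2, 4]
def Bp : GG := List.formPerm [(0 : Fin 6), 1, 4, 2]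

lemma hA : Ap ∈ D :=
  ⟨List.formPerm [(0 : Fin 6), 1, 2, 3], Subgroup.subset_closure (Set.mem_insert _ _), by decide⟩

lemma hB : Bp ∈ D :=
  ⟨List.formPerm [(2 : Fin 6), 3, 4, 5],
    Subgroup.subset_closure (Set.mem_insert_of_mem _ rfl), by decide⟩

lemma h01 : Equiv.swap (0 : Fin 6) 1 ∈ D :=
  (by decide : Equiv.swap (0 : Fin 6) 1 = Bp⁻¹ * (Ap * (Bp⁻¹ * (Ap * (Ap))))) ▸ (mul_mem (inv_mem hB) (mul_mem hA (mul_mem (inv_mem hB) (mul_mem hA hA))))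

lemma h02 : Equiv.swap (0 : Fin 6) 2 ∈ D :=
  (by decide : Equiv.swap (0 : Fin 6) 2 = Bp * (Ap⁻¹ * (Bp * (Ap * (Ap))))) ▸ (mul_mem hB (mul_mem (inv_mem hA) (mul_mem hB (mul_mem hA hA))))

lemma h04 : Equiv.swap (0 : Fin 6) 4 ∈ D :=
  (by decide : Equiv.swap (0 : Fin 6) 4 = Ap * (Bp * (Ap⁻¹ * (Bp * (Ap))))) ▸ (mul_mem hA (mul_mem hB (mul_mem (inv_mem hA) (mul_mem hB hA))))

lemma h05 : Equiv.swap (0 : Fin 6) 5 ∈ D :=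
  (by decide : Equiv.swap (0 : Fin 6) 5 = Ap * (Bp⁻¹ * (Ap * (Bp⁻¹ * (Ap))))) ▸ (mul_mem hA (mul_mem (inv_mem hB) (mul_mem hA (mul_mem (inv_mem hB) hA))))

lemma h12 : Equiv.swap (1 : Fin 6) 2 ∈ D :=
  (by decide : Equiv.swap (1 : Fin 6) 2 = Bp * (Ap * (Bp⁻¹ * (Ap * (Bp * (Ap * (Ap))))))) ▸ (mul_mem hB (mul_mem hA (mul_mem (inv_mem hB) (mul_mem hA (mul_mem hB (mul_mem hA hA))))))

lemma h14 : Equiv.swap (1 : Fin 6) 4 ∈ D :=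
  (by decide : Equiv.swap (1 : Fin 6) 4 = Bp⁻¹ * (Ap * (Bp * (Bp * (Ap))))) ▸ (mul_mem (inv_mem hB) (mul_mem hA (mul_mem hB (mul_mem hB hA))))

lemma h15 : Equiv.swap (1 : Fin 6) 5 ∈ D :=
  (by decide : Equiv.swap (1 : Fin 6) 5 = Ap * (Bp⁻¹ * (Ap * (Bp * (Bp))))) ▸ (mul_mem hA (mul_mem (inv_mem hB) (mul_mem hA (mul_mem hB hB))))

lemma h24 : Equiv.swap (2 : Fin 6) 4 ∈ D :=
  (by decide : Equiv.swap (2 : Fin 6) 4 = Bp⁻¹ * (Ap * (Ap * (Bp⁻¹ * (Ap))))) ▸ (mul_mem (inv_mem hB) (mul_mem hA (mul_mem hA (mul_mem (inv_mem hB) hA))))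

lemma h25 : Equiv.swap (2 : Fin 6) 5 ∈ D :=
  (by decide : Equiv.swap (2 : Fin 6) 5 = Bp * (Bp * (Ap * (Bp⁻¹ * (Ap))))) ▸ (mul_mem hB (mul_mem hB (mul_mem hA (mul_mem (inv_mem hB) hA))))

lemma h45 : Equiv.swap (4 : Fin 6) 5 ∈ D :=
  (by decide : Equiv.swap (4 : Fin 6) 5 = Bp * (Ap * (Bp⁻¹ * (Ap * (Bp))))) ▸ (mul_mem hB (mul_mem hA (mul_mem (inv_mem hB) (mul_mem hA hB))))


lemma swapD : ∀ a b : Fin 6, a ≠ 3 → b ≠ 3 → Equiv.swap a b ∈ D := by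
  intro a b ha hb
  fin_cases a <;> fin_cases b <;>
    first
      | exact absurd rfl ha
      | exact absurd rfl hb
      | (rw [Equiv.swap_self]; exact one_mem D)
      | exact h01 | exact h02 | exact h04 | exact h05 | exact h12
      | exact h14 | exact h15 | exact h24 | exact h25 | exact h45
      | (rw [Equiv.swap_comm]
         first
           | exact h01 | exact h02 | exact h04 | exact h05 | exact h12
           | exact h14 | exact h15 | exact h24 | exact h25 | exact h45)

lemma stab_le (σ : GG) (hσ3 : σ 3 = 3) : σ ∈ D := by
  classical
  set S : Set GG := {f | ∃ a b : Fin 6, a ≠ 3 ∧ b ≠ 3 ∧ a ≠ b ∧ f = Equiv.swap a b} with hS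
  have hSswap : ∀ f ∈ S, f.IsSwap := by
    rintro f ⟨a, b, -, -, hab, rfl⟩
    exact ⟨a, b, hab, rfl⟩
  have hmem : σ ∈ Subgroup.closure S := by
    rw [mem_closure_isSwap hSswap]
    refine ⟨Set.toFinite _, fun x => ?_⟩
    by_cases h : σ x = x
    · rw [h]; exact MulAction.mem_orbit_self x
    · have hx3 : x ≠ 3 := by rintro rfl; exact h hσ3
      have hsx3 : σ x ≠ 3 := by
        intro e
        exact hx3 (σ.injective (e.trans hσ3.symm))
      refine ⟨⟨Equiv.swap x (σ x), Subgroup.subset_closure ⟨x, σ x, hx3, hsx3, fun e => h e.symm, rfl⟩⟩, ?_⟩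
      exact Equiv.swap_apply_left x (σ x)
  refine (Subgroup.closure_le D).mpr ?_ hmem
  rintro f ⟨a, b, ha, hb, -, rfl⟩
  exact swapD a b ha hb

/-- There is a group automorphism `ψ` of the symmetric group on `{1,…,6}`
(modeled as `Fin 6`, 0-indexed) with the prescribed values on the transpositions
`(1 2), (1 3), (1 4), (1 5), (1 6)` such that a permutation `π` belongs to the subgroup
generated by `α = (1 2 3 4)` and `β = (3 4 5 6)` if and only if `ψ(π)` fixes the point `4`
(0-indexed: the point `3`). -/
theorem outer_automorphism_characterizes_four_four_puzzle :
    ∃ ψ : Equiv.Perm (Fin 6) ≃* Equiv.Perm (Fin 6),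
      ψ (Equiv.swap 0 1) = Equiv.swap 0 4 * Equiv.swap 1 2 * Equiv.swap 3 5 ∧
      ψ (Equiv.swap 0 2) = Equiv.swap 0 3 * Equiv.swap 1 5 * Equiv.swap 2 4 ∧
      ψ (Equiv.swap 0 3) = Equiv.swap 0 2 * Equiv.swap 1 3 * Equiv.swap 4 5 ∧
      ψ (Equiv.swap 0 4) = Equiv.swap 0 1 * Equiv.swap 2 5 * Equiv.swap 3 4 ∧
      ψ (Equiv.swap 0 5) = Equiv.swap 0 5 * Equiv.swap 1 4 * Equiv.swap 2 3 ∧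
      ∀ π : Equiv.Perm (Fin 6),
        (π ∈ Subgroup.closure
          ({List.formPerm [(0 : Fin 6), 1, 2, 3],
            List.formPerm [(2 : Fin 6), 3, 4, 5]} : Set (Equiv.Perm (Fin 6)))) ↔
        ψ π 3 = 3 := by
  refine ⟨psi, ?_, ?_, ?_, ?_, ?_, fun π => ⟨fun h => ?_, fun h => ?_⟩⟩
  · rw [psi_eq]; decide
  · rw [psi_eq]; decide
  · rw [psi_eq]; decide
  · rw [psi_eq]; decide
  · rw [psi_eq]; decide
  · -- forward
    rw [psi_eq]
    revert h
    refine fun h => (?_ : π ∈ (MulAction.stabilizer (Equiv.Perm (Fin 6)) (3 : Fin 6)).comap Phi)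
    refine (Subgroup.closure_le _).mpr ?_ h
    rintro x (rfl | rfl)
    · show Phi _ • (3 : Fin 6) = 3
      decide
    · show Phi _ • (3 : Fin 6) = 3
      decide
  · -- backward
    rw [psi_eq] at h
    have hD : Phi π ∈ D := stab_le (Phi π) h
    obtain ⟨π', hπ', he⟩ := hD
    exact Phi_inj he ▸ hπ'
end

section
/- There exists a constant K such that the following holds. Let V = {1,…,n}, let m ≥ 3, and let w : {1,…,m} → V be a surjective map such that for every i with 1 < i < m the three values w(i−1), w(i), w(i+1) are pairwise distinct. Let 𝒞 = {(w(i−1) w(i) w(i+1)) : 1 < i < m} be the corresponding set of 3-cycles. Then every even permutation of V can be written as a product of at most K·n³ elements of 𝒞 ∪ 𝒞⁻¹ (i.e., elements of 𝒞 and their inverses). -/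
set_option maxHeartbeats 1000000

section E3

open Equiv Equiv.Perm

variable {α : Type*} [DecidableEq α]

/-- The 3-cycle `(a b c)` as a product of swaps. -/
def e3 (a b c : α) : Equiv.Perm α := Equiv.swap a b * Equiv.swap b c

lemma formPerm_eq_e3 (a b c : α) : List.formPerm [a, b, c] = e3 a b c := by
  simp [List.formPerm, e3]

lemma e3_inv (a b c : α) : (e3 a b c)⁻¹ = e3 c b a := by
  rw [e3, e3, mul_inv_rev, Equiv.swap_inv, Equiv.swap_inv,
    Equiv.swap_comm c b, Equiv.swap_comm b a]

lemma e3_conj (σ : Equiv.Perm α) (a b c : α) :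
    σ * e3 a b c * σ⁻¹ = e3 (σ a) (σ b) (σ c) := by
  rw [e3, e3, Equiv.swap_apply_apply, Equiv.swap_apply_apply]
  group

lemma e3_conj' (σ : Equiv.Perm α) (a b c : α) :
    σ⁻¹ * e3 a b c * σ = e3 (σ⁻¹ a) (σ⁻¹ b) (σ⁻¹ c) := by
  simpa using e3_conj σ⁻¹ a b c

lemma e3_apply₁ {a b c : α} (hab : a ≠ b) (hac : a ≠ c) : e3 a b c a = b := by
  simp [e3, Equiv.swap_apply_of_ne_of_ne hab hac]

lemma e3_apply₂ {a b c : α} (hab : a ≠ b) (hbc : b ≠ c) (hac : a ≠ c) : e3 a b c b = c := by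
  simp [e3, Equiv.swap_apply_of_ne_of_ne hac.symm hbc.symm]

lemma e3_apply₃ {a b c : α} (hbc : b ≠ c) : e3 a b c c = a := by
  simp [e3]

lemma e3_apply_other {a b c x : α} (ha : x ≠ a) (hb : x ≠ b) (hc : x ≠ c) : e3 a b c x = x := by
  simp [e3, Equiv.swap_apply_of_ne_of_ne hb hc, Equiv.swap_apply_of_ne_of_ne ha hb]

lemma e3_rot {a b c : α} (hab : a ≠ b) (hbc : b ≠ c) (hac : a ≠ c) : e3 a b c = e3 b c a := by
  ext x
  by_cases hxa : x = a
  · subst hxa; rw [e3_apply₁ hab hac, e3_apply₃ hac.symm]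
  by_cases hxb : x = b
  · subst hxb; rw [e3_apply₂ hab hbc hac, e3_apply₁ hbc (Ne.symm hab)]
  by_cases hxc : x = c
  · subst hxc; rw [e3_apply₃ hbc, e3_apply₂ hbc hac.symm hab.symm]
  · rw [e3_apply_other hxa hxb hxc, e3_apply_other hxb hxc hxa]

lemma e3_sign [Fintype α] {a b c : α} (hab : a ≠ b) (hbc : b ≠ c) :
    Equiv.Perm.sign (e3 a b c) = 1 := by
  simp [e3, Equiv.Perm.sign_swap, hab, hbc]

/-- Every even permutation is a product of at most `support.card` 3-cycles. -/
lemma even_perm_three_cycles [Fintype α] (π : Equiv.Perm α) (hπ : Equiv.Perm.sign π = 1) :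
    ∃ L : List (Equiv.Perm α), L.length ≤ π.support.card ∧
      (∀ g ∈ L, ∃ x y z : α, x ≠ y ∧ y ≠ z ∧ x ≠ z ∧ g = e3 x y z) ∧ L.prod = π := by
  generalize hk : π.support.card = k
  induction k using Nat.strong_induction_on generalizing π with
  | _ k ih =>
  subst hk
  by_cases h1 : π = 1
  · exact ⟨[], by simp, by simp, by simp [h1]⟩
  obtain ⟨a, ha⟩ : ∃ a, a ∈ π.support := by
    by_contra h
    push_neg at h
    exact h1 (by ext x; simpa using Equiv.Perm.notMem_support.mp (h x))
  have hab : π a ≠ a := Equiv.Perm.mem_support.mp ha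
  set b := π a with hbdef
  have hb : b ∈ π.support := Equiv.Perm.apply_mem_support.mpr ha
  have hbne : π b ≠ b := Equiv.Perm.mem_support.mp hb
  have hcard3 : 3 ≤ π.support.card := by
    have h0 : π.support.card ≠ 0 := fun h =>
      h1 (Equiv.Perm.card_support_eq_zero.mp h)
    have hone : π.support.card ≠ 1 := Equiv.Perm.card_support_ne_one π
    have h2 : π.support.card ≠ 2 := by
      intro h
      obtain ⟨x, y, hxy, rfl⟩ := Equiv.Perm.card_support_eq_two.mp h
      rw [Equiv.Perm.sign_swap hxy] at hπ
      simp at hπ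
    omega
  obtain ⟨z, hz⟩ : (π.support \ {a, b}).Nonempty :=
    Finset.sdiff_nonempty.mpr (fun hsub => by
        have := Finset.card_le_card hsub
        have hle : ({a, b} : Finset α).card ≤ 2 := Finset.card_le_two
        omega)
  simp only [Finset.mem_sdiff, Finset.mem_insert, Finset.mem_singleton, not_or] at hz
  obtain ⟨hzsupp, hza, hzb⟩ := hz
  have hzsupp' : π z ≠ z := Equiv.Perm.mem_support.mp hzsupp
  -- the 3-cycle
  set c : Equiv.Perm α := e3 a b z with hcdef
  have hcinv : c⁻¹ = e3 z b a := e3_inv a b z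
  set π' : Equiv.Perm α := c⁻¹ * π with hπ'def
  have hπ'a : π' a = a := by
    have : c⁻¹ b = a := by
      rw [hcinv]
      exact e3_apply₂ hzb hab hza
    simp [hπ'def, Equiv.Perm.mul_apply, ← hbdef, this]
  have hfix : ∀ x, x ∉ π.support → π' x = x := by
    intro x hx
    have hπx : π x = x := Equiv.Perm.notMem_support.mp hx
    have hxa : x ≠ a := fun h => hx (h ▸ ha)
    have hxb : x ≠ b := fun h => hx (h ▸ hb)
    have hxz : x ≠ z := fun h => hx (h ▸ hzsupp)
    have : c⁻¹ x = x := by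
      rw [hcinv]; exact e3_apply_other hxz hxb hxa
    simp [hπ'def, Equiv.Perm.mul_apply, hπx, this]
  have hsub : π'.support ⊆ π.support := by
    intro x hx
    by_contra hxn
    exact (Equiv.Perm.mem_support.mp hx) (hfix x hxn)
  have hssub : π'.support ⊂ π.support := by
    refine ⟨hsub, fun h => ?_⟩
    have := h ha
    exact (Equiv.Perm.mem_support.mp this) hπ'a
  have hcardlt : π'.support.card < π.support.card := Finset.card_lt_card hssub
  have hsign' : Equiv.Perm.sign π' = 1 := by
    rw [hπ'def, map_mul, map_inv, e3_sign (Ne.symm hab) (fun h => hzb h.symm)]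
    · simpa using hπ
  obtain ⟨L', hlen', hmem', hprod'⟩ := ih π'.support.card hcardlt π' hsign' rfl
  refine ⟨c :: L', ?_, ?_, ?_⟩
  · simpa using Nat.succ_le_of_lt (lt_of_le_of_lt hlen' hcardlt)
  · intro g hg
    rcases List.mem_cons.mp hg with rfl | hg
    · exact ⟨a, b, z, Ne.symm hab, fun h => hzb h.symm, fun h => hza h.symm, rfl⟩
    · exact hmem' g hg
  · simp [hprod', hπ'def]

end E3

/-- The set of 3-cycles `(w(i-1) w(i) w(i+1))` arising from a walk `w` (0-indexed: triples
of consecutive positions `i, i+1, i+2` with `i + 2 < m`). -/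
def walkThreeCycles (n m : ℕ) (w : Fin m → Fin n) : Set (Equiv.Perm (Fin n)) :=
  {π | ∃ i : ℕ, ∃ h : i + 2 < m,
    π = List.formPerm [w ⟨i, by omega⟩, w ⟨i + 1, by omega⟩, w ⟨i + 2, h⟩]}

section Walk

variable {n m : ℕ}

/-- Lists all of whose entries are walk 3-cycles or inverses thereof. -/
def GoodList (n m : ℕ) (w : Fin m → Fin n) (l : List (Equiv.Perm (Fin n))) : Prop :=
  ∀ g ∈ l, g ∈ walkThreeCycles n m w ∨ g⁻¹ ∈ walkThreeCycles n m w

lemma goodList_revinv {w : Fin m → Fin n} {l : List (Equiv.Perm (Fin n))}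
    (hl : GoodList n m w l) :
    GoodList n m w ((l.map fun x => x⁻¹).reverse) ∧
      ((l.map fun x => x⁻¹).reverse).length = l.length ∧
      ((l.map fun x => x⁻¹).reverse).prod = l.prod⁻¹ := by
  refine ⟨?_, by simp, (List.prod_inv_reverse l).symm⟩
  intro g hg
  rw [List.mem_reverse, List.mem_map] at hg
  obtain ⟨h, hh, rfl⟩ := hg
  rcases hl h hh with h1 | h2
  · right; simpa using h1
  · left; exact h2

lemma goodList_append {w : Fin m → Fin n} {l₁ l₂ : List (Equiv.Perm (Fin n))}
    (h₁ : GoodList n m w l₁) (h₂ : GoodList n m w l₂) : GoodList n m w (l₁ ++ l₂) := by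
  intro g hg
  rcases List.mem_append.mp hg with h | h
  · exact h₁ g h
  · exact h₂ g h

lemma goodList_single_of_mem {w : Fin m → Fin n} {t : Equiv.Perm (Fin n)}
    (ht : t ∈ walkThreeCycles n m w ∨ t⁻¹ ∈ walkThreeCycles n m w) : GoodList n m w [t] := by
  intro g hg
  simp only [List.mem_singleton] at hg
  subst hg
  exact ht

/-- sandwich `t⁻¹ * l.prod * t`. -/
lemma goodList_sandwich {w : Fin m → Fin n} {t : Equiv.Perm (Fin n)}
    (ht : t ∈ walkThreeCycles n m w ∨ t⁻¹ ∈ walkThreeCycles n m w)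
    {l : List (Equiv.Perm (Fin n))} (hl : GoodList n m w l) :
    GoodList n m w (t⁻¹ :: (l ++ [t])) ∧ (t⁻¹ :: (l ++ [t])).length = l.length + 2 ∧
      (t⁻¹ :: (l ++ [t])).prod = t⁻¹ * l.prod * t := by
  refine ⟨?_, by simp, by simp [mul_assoc]⟩
  intro g hg
  rcases List.mem_cons.mp hg with rfl | hg
  · rcases ht with h | h
    · right; simpa using h
    · left; exact h
  rcases List.mem_append.mp hg with h | h
  · exact hl g h
  · simp only [List.mem_singleton] at h; subst h; exact ht

lemma star_decomp (hm : 3 ≤ m) (w : Fin m → Fin n) (hsurj : Function.Surjective w)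
    (hdist : ∀ i : ℕ, ∀ h : i + 2 < m,
        w ⟨i, by omega⟩ ≠ w ⟨i + 1, by omega⟩ ∧
        w ⟨i + 1, by omega⟩ ≠ w ⟨i + 2, h⟩ ∧
        w ⟨i, by omega⟩ ≠ w ⟨i + 2, h⟩) :
    ∀ u : Fin n, u ≠ w ⟨0, by omega⟩ → u ≠ w ⟨1, by omega⟩ →
      ∃ l : List (Equiv.Perm (Fin n)), GoodList n m w l ∧ l.length ≤ 2 * n + 1 ∧
        l.prod = e3 (w ⟨0, by omega⟩) (w ⟨1, by omega⟩) u := by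
  classical
  set v₁ : Fin n := w ⟨0, by omega⟩ with hv₁
  set v₂ : Fin n := w ⟨1, by omega⟩ with hv₂
  have hv12 : v₁ ≠ v₂ := by
    have := (hdist 0 (by omega)).1
    simpa using this
  have hex : ∀ v : Fin n, ∃ k : ℕ, ∃ h : k < m, w ⟨k, h⟩ = v := by
    intro v
    obtain ⟨i, hi⟩ := hsurj v
    exact ⟨i.1, i.2, by simpa using hi⟩
  set f : Fin n → ℕ := fun v => Nat.find (hex v) with hf
  have hfspec : ∀ v, ∃ h : f v < m, w ⟨f v, h⟩ = v := fun v => Nat.find_spec (hex v)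
  have hfle : ∀ (k : ℕ) (h : k < m), f (w ⟨k, h⟩) ≤ k := fun k h => Nat.find_le ⟨h, rfl⟩
  set N : Fin n → ℕ := fun v => (Finset.univ.filter fun x => f x < f v).card with hN
  have hNlt : ∀ x y : Fin n, f x < f y → N x < N y := by
    intro x y hxy
    apply Finset.card_lt_card
    constructor
    · intro z hz
      simp only [Finset.mem_filter, Finset.mem_univ, true_and] at *
      omega
    · intro hsub
      have := hsub (Finset.mem_filter.mpr ⟨Finset.mem_univ x, hxy⟩)
      simp only [Finset.mem_filter, Finset.mem_univ, true_and] at this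
      omega
  have hNle : ∀ x : Fin n, N x ≤ n := by
    intro x
    calc N x ≤ Finset.univ.card := Finset.card_le_card (Finset.filter_subset _ _)
    _ = n := by simp
  suffices H : ∀ K : ℕ, ∀ u : Fin n, f u = K → u ≠ v₁ → u ≠ v₂ →
      ∃ l : List (Equiv.Perm (Fin n)), GoodList n m w l ∧ l.length ≤ 2 * N u + 1 ∧
        l.prod = e3 v₁ v₂ u by
    intro u h1 h2
    obtain ⟨l, hg, hlen, hp⟩ := H (f u) u rfl h1 h2
    exact ⟨l, hg, hlen.trans (by have := hNle u; omega), hp⟩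
  intro K
  induction K using Nat.strong_induction_on with
  | _ K ih =>
  intro u hKu hu1 hu2
  obtain ⟨hkm, hwk⟩ := hfspec u
  have hk0 : f u ≠ 0 := by
    intro h
    exact hu1 (by rw [hv₁, ← hwk]; exact (congrArg w (Fin.ext h.symm)).symm)
  have hk1 : f u ≠ 1 := by
    intro h
    exact hu2 (by rw [hv₂, ← hwk]; exact (congrArg w (Fin.ext h.symm)).symm)
  set i : ℕ := f u - 2 with hi
  have hi2 : i + 2 < m := by omega
  set a : Fin n := w ⟨i, by omega⟩ with ha
  set b : Fin n := w ⟨i + 1, by omega⟩ with hb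
  have hwi2 : w ⟨i + 2, hi2⟩ = u := by
    rw [← hwk]
    exact congrArg w (Fin.ext (show i + 2 = f u by omega))
  obtain ⟨dab', dbu', dau'⟩ := hdist i hi2
  have dab : a ≠ b := dab'
  have dbu : b ≠ u := by rw [← hwi2]; exact dbu'
  have dau : a ≠ u := by rw [← hwi2]; exact dau'
  set t : Equiv.Perm (Fin n) := e3 a b u with htdef
  have htC : t ∈ walkThreeCycles n m w := by
    refine ⟨i, hi2, ?_⟩
    rw [formPerm_eq_e3, hwi2]
  have htC' : t ∈ walkThreeCycles n m w ∨ t⁻¹ ∈ walkThreeCycles n m w := Or.inl htC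
  have htiC' : t⁻¹ ∈ walkThreeCycles n m w ∨ (t⁻¹)⁻¹ ∈ walkThreeCycles n m w := by
    right; rw [inv_inv]; exact htC
  have hfa : f a < K := by
    have h : f a ≤ i := hfle i (by omega)
    omega
  have hfb : f b < K := by
    have h : f b ≤ i + 1 := hfle (i + 1) (by omega)
    omega
  have rot2 : e3 v₂ u v₁ = e3 v₁ v₂ u := by
    rw [e3_rot (Ne.symm hu2) hu1 (Ne.symm hv12), e3_rot hu1 hv12 hu2]
  by_cases ha1 : a = v₁
  · by_cases hb2 : b = v₂
    · -- case 1 : t itself is the star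
      refine ⟨[t], goodList_single_of_mem htC', ?_, ?_⟩
      · exact Nat.succ_le_succ (Nat.zero_le _)
      · simp only [List.prod_cons, List.prod_nil, mul_one]
        rw [htdef, ha1, hb2]
    · -- case 3 : a = v₁, b ∉ {v₁, v₂}
      have hb1 : b ≠ v₁ := fun h => dab (ha1.trans h.symm)
      obtain ⟨lb, hgb, hlb, hpb⟩ := ih (f b) (by omega) b rfl hb1 hb2
      obtain ⟨hgb', hlb', hpb'⟩ := goodList_revinv hgb
      obtain ⟨hG, hL, hP⟩ := goodList_sandwich htC' hgb'
      refine ⟨_, hG, by rw [hL, hlb']; have := hNlt b u (by omega); omega, ?_⟩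
      rw [hP, hpb', hpb]
      have hti : t⁻¹ = e3 u b v₁ := by rw [htdef, ha1, e3_inv]
      have e1 : t⁻¹ b = v₁ := by rw [hti]; exact e3_apply₂ (Ne.symm dbu) hb1 hu1
      have e2 : t⁻¹ v₂ = v₂ := by
        rw [hti]; exact e3_apply_other (Ne.symm hu2) (Ne.symm hb2) (Ne.symm hv12)
      have e3' : t⁻¹ v₁ = u := by rw [hti]; exact e3_apply₃ hb1
      rw [e3_inv v₁ v₂ b, e3_conj' t b v₂ v₁, e1, e2, e3']
  · by_cases ha2 : a = v₂
    · by_cases hb1 : b = v₁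
      · -- case 2 : t⁻¹ is the star (rotated)
        refine ⟨[t⁻¹], goodList_single_of_mem htiC', ?_, ?_⟩
        · exact Nat.succ_le_succ (Nat.zero_le _)
        · simp only [List.prod_cons, List.prod_nil, mul_one]
          rw [htdef, ha2, hb1, e3_inv]
          exact e3_rot hu1 hv12 hu2
      · -- case 4 : a = v₂, b ∉ {v₁, v₂}
        have hb2 : b ≠ v₂ := fun h => dab (ha2.trans h.symm)
        obtain ⟨lb, hgb, hlb, hpb⟩ := ih (f b) (by omega) b rfl hb1 hb2
        obtain ⟨hgb', hlb', hpb'⟩ := goodList_revinv hgb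
        obtain ⟨hG, hL, hP⟩ := goodList_sandwich htC' hgb'
        refine ⟨_, hG, by rw [hL, hlb']; have := hNlt b u (by omega); omega, ?_⟩
        rw [hP, hpb', hpb]
        have hti : t⁻¹ = e3 u b v₂ := by rw [htdef, ha2, e3_inv]
        have e1 : t⁻¹ b = v₂ := by rw [hti]; exact e3_apply₂ (Ne.symm dbu) hb2 hu2
        have e2 : t⁻¹ v₂ = u := by rw [hti]; exact e3_apply₃ hb2
        have e3' : t⁻¹ v₁ = v₁ := by
          rw [hti]; exact e3_apply_other (Ne.symm hu1) (Ne.symm hb1) hv12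
        rw [e3_inv v₁ v₂ b, e3_conj' t b v₂ v₁, e1, e2, e3', rot2]
    · by_cases hb1 : b = v₁
      · -- case 5 : b = v₁, a ∉ {v₁, v₂}
        obtain ⟨la, hga, hla, hpa⟩ := ih (f a) (by omega) a rfl ha1 ha2
        obtain ⟨hga', hla', hpa'⟩ := goodList_revinv hga
        obtain ⟨hG, hL, hP⟩ := goodList_sandwich htiC' hga'
        refine ⟨_, hG, by rw [hL, hla']; have := hNlt a u (by omega); omega, ?_⟩
        rw [hP, hpa', hpa, inv_inv]
        have htb : t = e3 a v₁ u := by rw [htdef, hb1]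
        have e1 : t a = v₁ := by rw [htb]; exact e3_apply₁ ha1 dau
        have e2 : t v₂ = v₂ := by
          rw [htb]; exact e3_apply_other (Ne.symm ha2) (Ne.symm hv12) (Ne.symm hu2)
        have e3' : t v₁ = u := by rw [htb]; exact e3_apply₂ ha1 (Ne.symm hu1) dau
        rw [e3_inv v₁ v₂ a, e3_conj t a v₂ v₁, e1, e2, e3']
      · by_cases hb2 : b = v₂
        · -- case 6 : b = v₂, a ∉ {v₁, v₂}
          obtain ⟨la, hga, hla, hpa⟩ := ih (f a) (by omega) a rfl ha1 ha2
          obtain ⟨hga', hla', hpa'⟩ := goodList_revinv hga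
          obtain ⟨hG, hL, hP⟩ := goodList_sandwich htiC' hga'
          refine ⟨_, hG, by rw [hL, hla']; have := hNlt a u (by omega); omega, ?_⟩
          rw [hP, hpa', hpa, inv_inv]
          have htb : t = e3 a v₂ u := by rw [htdef, hb2]
          have e1 : t a = v₂ := by rw [htb]; exact e3_apply₁ ha2 dau
          have e2 : t v₂ = u := by rw [htb]; exact e3_apply₂ ha2 (Ne.symm hu2) dau
          have e3' : t v₁ = v₁ := by
            rw [htb]; exact e3_apply_other (Ne.symm ha1) hv12 (Ne.symm hu1)
          rw [e3_inv v₁ v₂ a, e3_conj t a v₂ v₁, e1, e2, e3', rot2]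
        · -- case 7 : generic
          obtain ⟨la, hga, hla, hpa⟩ := ih (f a) (by omega) a rfl ha1 ha2
          obtain ⟨hG, hL, hP⟩ := goodList_sandwich htC' hga
          refine ⟨_, hG, by rw [hL]; have := hNlt a u (by omega); omega, ?_⟩
          rw [hP, hpa]
          have hti : t⁻¹ = e3 u b a := by rw [htdef, e3_inv]
          have e1 : t⁻¹ v₁ = v₁ := by
            rw [hti]; exact e3_apply_other (Ne.symm hu1) (Ne.symm hb1) (Ne.symm ha1)
          have e2 : t⁻¹ v₂ = v₂ := by
            rw [hti]; exact e3_apply_other (Ne.symm hu2) (Ne.symm hb2) (Ne.symm ha2)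
          have e3' : t⁻¹ a = u := by rw [hti]; exact e3_apply₃ (Ne.symm dab)
          rw [e3_conj' t v₁ v₂ a, e1, e2, e3']

lemma star_triple (hm : 3 ≤ m) (w : Fin m → Fin n) (hsurj : Function.Surjective w)
    (hdist : ∀ i : ℕ, ∀ h : i + 2 < m,
        w ⟨i, by omega⟩ ≠ w ⟨i + 1, by omega⟩ ∧
        w ⟨i + 1, by omega⟩ ≠ w ⟨i + 2, h⟩ ∧
        w ⟨i, by omega⟩ ≠ w ⟨i + 2, h⟩)
    (x y z : Fin n) (hxy : x ≠ y) (hyz : y ≠ z) (hxz : x ≠ z)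
    (hx1 : x ≠ w ⟨0, by omega⟩) (hx2 : x ≠ w ⟨1, by omega⟩)
    (hy1 : y ≠ w ⟨0, by omega⟩) (hy2 : y ≠ w ⟨1, by omega⟩) :
    ∃ l : List (Equiv.Perm (Fin n)), GoodList n m w l ∧ l.length ≤ 5 * (2 * n + 1) ∧
      l.prod = e3 x y z := by
  set v₁ : Fin n := w ⟨0, by omega⟩ with hv₁
  set v₂ : Fin n := w ⟨1, by omega⟩ with hv₂
  have hv12 : v₁ ≠ v₂ := by
    have := (hdist 0 (by omega)).1
    simpa using this
  obtain ⟨lx, hgx, hlx, hpx⟩ := star_decomp hm w hsurj hdist x hx1 hx2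
  obtain ⟨ly, hgy, hly, hpy⟩ := star_decomp hm w hsurj hdist y hy1 hy2
  set sx : Equiv.Perm (Fin n) := e3 v₁ v₂ x with hsx
  set sy : Equiv.Perm (Fin n) := e3 v₁ v₂ y with hsy
  have hσ1 : (sx * sy) v₁ = x := by
    rw [Equiv.Perm.mul_apply, hsy, hsx,
      e3_apply₁ hv12 (Ne.symm hy1), e3_apply₂ hv12 (Ne.symm hx2) (Ne.symm hx1)]
  have hσ2 : (sx * sy) v₂ = y := by
    rw [Equiv.Perm.mul_apply, hsy, hsx,
      e3_apply₂ hv12 (Ne.symm hy2) (Ne.symm hy1),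
      e3_apply_other hy1 hy2 (Ne.symm hxy)]
  have hσx : (sx * sy) x = v₁ := by
    rw [Equiv.Perm.mul_apply, hsy, hsx, e3_apply_other hx1 hx2 hxy, e3_apply₃ (Ne.symm hx2)]
  have hσy : (sx * sy) y = v₂ := by
    rw [Equiv.Perm.mul_apply, hsy, hsx, e3_apply₃ (Ne.symm hy2), e3_apply₁ hv12 (Ne.symm hx1)]
  have hσo : ∀ p : Fin n, p ≠ v₁ → p ≠ v₂ → p ≠ x → p ≠ y → (sx * sy) p = p := by
    intro p h1 h2 h3 h4
    rw [Equiv.Perm.mul_apply, hsy, hsx, e3_apply_other h1 h2 h4, e3_apply_other h1 h2 h3]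
  obtain ⟨c, hc1, hc2, hcz⟩ : ∃ c : Fin n, c ≠ v₁ ∧ c ≠ v₂ ∧ (sx * sy) c = z := by
    by_cases hz1 : z = v₁
    · exact ⟨x, hx1, hx2, by rw [hσx, hz1]⟩
    · by_cases hz2 : z = v₂
      · exact ⟨y, hy1, hy2, by rw [hσy, hz2]⟩
      · exact ⟨z, hz1, hz2, hσo z hz1 hz2 (Ne.symm hxz) (Ne.symm hyz)⟩
  obtain ⟨lc, hgc, hlc, hpc⟩ := star_decomp hm w hsurj hdist c hc1 hc2
  obtain ⟨hgr, hlr, hpr⟩ := goodList_revinv (goodList_append hgx hgy)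
  refine ⟨(lx ++ ly) ++ lc ++ ((lx ++ ly).map fun g => g⁻¹).reverse, ?_, ?_, ?_⟩
  · exact goodList_append (goodList_append (goodList_append hgx hgy) hgc) hgr
  · simp only [List.length_append, List.length_reverse, List.length_map]
    omega
  · rw [List.prod_append, List.prod_append, hpr, List.prod_append, hpx, hpy, hpc]
    have := e3_conj (sx * sy) v₁ v₂ c
    rw [hσ1, hσ2, hcz] at this
    rw [← this, hsx, hsy]

lemma threecycle_decomp (hm : 3 ≤ m) (w : Fin m → Fin n) (hsurj : Function.Surjective w)
    (hdist : ∀ i : ℕ, ∀ h : i + 2 < m,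
        w ⟨i, by omega⟩ ≠ w ⟨i + 1, by omega⟩ ∧
        w ⟨i + 1, by omega⟩ ≠ w ⟨i + 2, h⟩ ∧
        w ⟨i, by omega⟩ ≠ w ⟨i + 2, h⟩)
    (x y z : Fin n) (hxy : x ≠ y) (hyz : y ≠ z) (hxz : x ≠ z) :
    ∃ l : List (Equiv.Perm (Fin n)), GoodList n m w l ∧ l.length ≤ 5 * (2 * n + 1) ∧
      l.prod = e3 x y z := by
  set v₁ : Fin n := w ⟨0, by omega⟩ with hv₁
  set v₂ : Fin n := w ⟨1, by omega⟩ with hv₂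
  have hv12 : v₁ ≠ v₂ := by
    have := (hdist 0 (by omega)).1
    simpa using this
  have hrot : ∀ a b c : Fin n, a ≠ b → b ≠ c → a ≠ c → e3 a b c = e3 b c a := by
    intro a b c h1 h2 h3; exact e3_rot h1 h2 h3
  have bound : ∀ u : Fin n, u ≠ v₁ → u ≠ v₂ →
      (∃ l, GoodList n m w l ∧ l.length ≤ 5 * (2 * n + 1) ∧ l.prod = e3 v₁ v₂ u)
      ∧ (∃ l, GoodList n m w l ∧ l.length ≤ 5 * (2 * n + 1) ∧ l.prod = e3 u v₂ v₁) := by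
    intro u h1 h2
    obtain ⟨l, hg, hl, hp⟩ := star_decomp hm w hsurj hdist u h1 h2
    obtain ⟨hg', hl', hp'⟩ := goodList_revinv hg
    constructor
    · exact ⟨l, hg, by omega, hp⟩
    · exact ⟨_, hg', by rw [hl']; omega, by rw [hp', hp, e3_inv]⟩
  by_cases hx1 : x = v₁
  · by_cases hy2 : y = v₂
    · -- x = v₁, y = v₂
      have hz1 : z ≠ v₁ := fun h => hxz (hx1.trans h.symm)
      have hz2 : z ≠ v₂ := fun h => hyz (hy2.trans h.symm)
      obtain ⟨l, hg, hl, hp⟩ := (bound z hz1 hz2).1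
      exact ⟨l, hg, hl, by rw [hp, hx1, hy2]⟩
    · by_cases hz2 : z = v₂
      · -- x = v₁, z = v₂ : goal e3 v₁ y v₂
        have hy1 : y ≠ v₁ := fun h => hxy (hx1.trans h.symm)
        obtain ⟨l, hg, hl, hp⟩ := (bound y hy1 hy2).2
        refine ⟨l, hg, hl, ?_⟩
        rw [hp, hx1, hz2, hrot v₁ y v₂ (Ne.symm hy1) hy2 hv12,
          hrot y v₂ v₁ hy2 (Ne.symm hv12) hy1]
      · -- only v₁, first position
        have hy1 : y ≠ v₁ := fun h => hxy (hx1.trans h.symm)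
        have hz1 : z ≠ v₁ := fun h => hxz (hx1.trans h.symm)
        obtain ⟨l, hg, hl, hp⟩ := star_triple hm w hsurj hdist y z x hyz (Ne.symm hxz)
          (Ne.symm hxy) hy1 hy2 hz1 hz2
        refine ⟨l, hg, hl, ?_⟩
        rw [hp, ← hrot x y z hxy hyz hxz]
  · by_cases hx2 : x = v₂
    · by_cases hy1 : y = v₁
      · -- x = v₂, y = v₁ : goal e3 v₂ v₁ z
        have hz1 : z ≠ v₁ := fun h => hyz (hy1.trans h.symm)
        have hz2 : z ≠ v₂ := fun h => hxz (hx2.trans h.symm)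
        obtain ⟨l, hg, hl, hp⟩ := (bound z hz1 hz2).2
        refine ⟨l, hg, hl, ?_⟩
        rw [hp, hx2, hy1, hrot z v₂ v₁ hz2 (Ne.symm hv12) hz1]
      · by_cases hz1 : z = v₁
        · -- x = v₂, z = v₁ : goal e3 v₂ y v₁
          have hy2 : y ≠ v₂ := fun h => hxy (hx2.trans h.symm)
          obtain ⟨l, hg, hl, hp⟩ := (bound y hy1 hy2).1
          refine ⟨l, hg, hl, ?_⟩
          rw [hp, hx2, hz1, hrot v₂ y v₁ (Ne.symm hy2) hy1 (Ne.symm hv12),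
            hrot y v₁ v₂ hy1 hv12 hy2]
        · -- only v₂, first position
          have hy2 : y ≠ v₂ := fun h => hxy (hx2.trans h.symm)
          have hz2 : z ≠ v₂ := fun h => hxz (hx2.trans h.symm)
          obtain ⟨l, hg, hl, hp⟩ := star_triple hm w hsurj hdist y z x hyz (Ne.symm hxz)
            (Ne.symm hxy) hy1 hy2 hz1 hz2
          refine ⟨l, hg, hl, ?_⟩
          rw [hp, ← hrot x y z hxy hyz hxz]
    · by_cases hy1 : y = v₁
      · by_cases hz2 : z = v₂
        · -- y = v₁, z = v₂ : goal e3 x v₁ v₂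
          obtain ⟨l, hg, hl, hp⟩ := (bound x hx1 hx2).1
          refine ⟨l, hg, hl, ?_⟩
          rw [hp, hy1, hz2, hrot x v₁ v₂ (hy1 ▸ hxy) hv12 (hz2 ▸ hxz)]
        · -- only v₁, middle position
          have hz1 : z ≠ v₁ := fun h => hyz (h ▸ hy1 ▸ rfl)
          obtain ⟨l, hg, hl, hp⟩ := star_triple hm w hsurj hdist z x y (Ne.symm hxz) hxy
            (Ne.symm hyz) hz1 hz2 hx1 hx2
          refine ⟨l, hg, hl, ?_⟩
          rw [hp, hrot z x y (Ne.symm hxz) hxy (Ne.symm hyz)]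
      · by_cases hy2 : y = v₂
        · by_cases hz1 : z = v₁
          · -- y = v₂, z = v₁ : goal e3 x v₂ v₁
            obtain ⟨l, hg, hl, hp⟩ := (bound x hx1 hx2).2
            exact ⟨l, hg, hl, by rw [hp, hy2, hz1]⟩
          · -- only v₂, middle position
            have hz2 : z ≠ v₂ := fun h => hyz (h ▸ hy2 ▸ rfl)
            obtain ⟨l, hg, hl, hp⟩ := star_triple hm w hsurj hdist z x y (Ne.symm hxz) hxy
              (Ne.symm hyz) hz1 hz2 hx1 hx2
            refine ⟨l, hg, hl, ?_⟩
            rw [hp, hrot z x y (Ne.symm hxz) hxy (Ne.symm hyz)]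
        · by_cases hz1 : z = v₁
          · exact star_triple hm w hsurj hdist x y z hxy hyz hxz hx1 hx2 hy1 hy2
          · by_cases hz2 : z = v₂
            · exact star_triple hm w hsurj hdist x y z hxy hyz hxz hx1 hx2 hy1 hy2
            · exact star_triple hm w hsurj hdist x y z hxy hyz hxz hx1 hx2 hy1 hy2

lemma concat_decomp (w : Fin m → Fin n) (B : ℕ) :
    ∀ L : List (Equiv.Perm (Fin n)),
      (∀ g ∈ L, ∃ l, GoodList n m w l ∧ l.length ≤ B ∧ l.prod = g) →
      ∃ l, GoodList n m w l ∧ l.length ≤ B * L.length ∧ l.prod = L.prod := by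
  intro L
  induction L with
  | nil => exact fun _ => ⟨[], by intro g hg; simp at hg, by simp, by simp⟩
  | cons g L ih =>
    intro h
    obtain ⟨lg, hg1, hg2, hg3⟩ := h g List.mem_cons_self
    obtain ⟨lr, hr1, hr2, hr3⟩ := ih (fun g' hg' => h g' (List.mem_cons_of_mem _ hg'))
    refine ⟨lg ++ lr, goodList_append hg1 hr1, ?_, ?_⟩
    · rw [List.length_append, List.length_cons, Nat.mul_succ]
      omega
    · rw [List.prod_append, hg3, hr3, List.prod_cons]

end Walk

/-- There is a constant `K` such that the following holds. For `V = Fin n`,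
`m ≥ 3` and a surjective map `w : Fin m → Fin n` in which any three consecutive values are
pairwise distinct, every even permutation of `V` is a product of at most `K * n ^ 3`
elements of the set `𝒞` of 3-cycles `(w(i-1) w(i) w(i+1))` and their inverses. -/
theorem walk_three_cycles_generate_even_cubic :
    ∃ K : ℕ, ∀ n m : ℕ, 3 ≤ m → ∀ w : Fin m → Fin n,
      Function.Surjective w →
      (∀ i : ℕ, ∀ h : i + 2 < m,
        w ⟨i, by omega⟩ ≠ w ⟨i + 1, by omega⟩ ∧
        w ⟨i + 1, by omega⟩ ≠ w ⟨i + 2, h⟩ ∧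
        w ⟨i, by omega⟩ ≠ w ⟨i + 2, h⟩) →
      ∀ π : Equiv.Perm (Fin n), Equiv.Perm.sign π = 1 →
        ∃ l : List (Equiv.Perm (Fin n)),
          l.length ≤ K * n ^ 3 ∧
          (∀ g ∈ l, g ∈ walkThreeCycles n m w ∨ g⁻¹ ∈ walkThreeCycles n m w) ∧
          l.prod = π := by
  refine ⟨15, ?_⟩
  intro n m hm w hsurj hdist π hπ
  obtain ⟨L, hLlen, hLmem, hLprod⟩ := even_perm_three_cycles π hπ
  have hdec : ∀ g ∈ L, ∃ l, GoodList n m w l ∧ l.length ≤ 5 * (2 * n + 1) ∧ l.prod = g := by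
    intro g hg
    obtain ⟨x, y, z, h1, h2, h3, rfl⟩ := hLmem g hg
    exact threecycle_decomp hm w hsurj hdist x y z h1 h2 h3
  obtain ⟨l, hgood, hlen, hprod⟩ := concat_decomp w (5 * (2 * n + 1)) L hdec
  refine ⟨l, ?_, hgood, by rw [hprod, hLprod]⟩
  have hsupp : π.support.card ≤ n := by
    have := Finset.card_le_univ π.support
    simpa using this
  have h1 : l.length ≤ 5 * (2 * n + 1) * n :=
    hlen.trans (Nat.mul_le_mul_left _ (hLlen.trans hsupp))
  refine h1.trans ?_
  rcases Nat.eq_zero_or_pos n with rfl | hn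
  · simp
  · have h2 : n ≤ n ^ 3 := by nlinarith
    have h3 : n * n ≤ n ^ 3 := by nlinarith
    nlinarith
end
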